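/- arXiv:1008.2894 — 14 statements merged into one kernel-verified Lean document; each statement's English description precedes it below -/
import Mathlib

section
/- For all positive integers n and nonnegative integers r, the sum over k from 0 to n-1 of (2k+1)·k^r·(k+1)^r·A_k is divisible by n, where A_k is the k-th Apéry number. -/
open Finset

def apery (n : ℕ) : ℕ :=
  ∑ k ∈ Finset.range (n + 1), (Nat.choose (n + k) (2 * k))^2 * (Nat.choose (2 * k) k)^2

/-- `Fz m k = C(k+m, 2m)^2` as an integer. -/
def Fz (m k : ℕ) : ℤ := ((k + m).choose (2 * m) : ℤ) ^ 2

/-- `Gz m k = C(k+m, 2m+1) * C(k+m+1, 2m+1)` as an integer. -/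
def Gz (m k : ℕ) : ℤ :=
  ((k + m).choose (2 * m + 1) : ℤ) * ((k + m + 1).choose (2 * m + 1) : ℤ)

lemma keyz (N j : ℕ) :
    ((j : ℤ) + 1) * (N.choose (j + 1) : ℤ) = ((N : ℤ) - j) * (N.choose j : ℤ) := by
  rcases le_or_gt j N with h | h
  · have h3 := congrArg (fun x : ℕ => (x : ℤ)) (Nat.choose_succ_right_eq N j)
    push_cast [Nat.cast_sub h] at h3
    linarith
  · rw [Nat.choose_eq_zero_of_lt h, Nat.choose_eq_zero_of_lt (by omega)]
    push_cast
    ring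

lemma succz (N j : ℕ) :
    ((N : ℤ) + 1) * (N.choose j : ℤ) = ((j : ℤ) + 1) * ((N + 1).choose (j + 1) : ℤ) := by
  have h3 := congrArg (fun x : ℕ => (x : ℤ)) (Nat.add_one_mul_choose_eq N j)
  push_cast at h3
  linarith

lemma sumF (m n : ℕ) :
    ∑ k ∈ range n, (2 * (k : ℤ) + 1) * Fz m k
      = (2 * (m : ℤ) + 1) * ((n + m).choose (2 * m + 1) : ℤ) ^ 2 := by
  induction n with
  | zero =>
      simp [Nat.choose_eq_zero_of_lt (show m < 2 * m + 1 by omega)]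
  | succ n ih =>
      rw [Finset.sum_range_succ, ih]
      have hp : (n + 1 + m).choose (2 * m + 1)
          = (n + m).choose (2 * m) + (n + m).choose (2 * m + 1) := by
        have e : n + 1 + m = (n + m) + 1 := by ring
        rw [e, Nat.choose_succ_succ']
      rw [hp]
      have h1 := keyz (n + m) (2 * m)
      push_cast at h1 ⊢
      simp only [Fz]
      linear_combination (-2 * ((n + m).choose (2 * m) : ℤ)) * h1

lemma sumG (m n : ℕ) :
    ∑ k ∈ range n, (2 * (k : ℤ) + 1) * Gz m k
      = (2 * (m : ℤ) + 3) * ((n + m).choose (2 * m + 1) : ℤ)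
        * ((n + m + 1).choose (2 * m + 3) : ℤ) := by
  induction n with
  | zero =>
      simp [Nat.choose_eq_zero_of_lt (show m < 2 * m + 1 by omega)]
  | succ n ih =>
      rw [Finset.sum_range_succ, ih]
      simp only [Gz]
      have pb : (n + 1 + m).choose (2 * m + 1)
          = (n + m).choose (2 * m) + (n + m).choose (2 * m + 1) := by
        have e : n + 1 + m = (n + m) + 1 := by ring
        rw [e, Nat.choose_succ_succ']
      have pb' : (n + m + 1).choose (2 * m + 1)
          = (n + m).choose (2 * m) + (n + m).choose (2 * m + 1) :=
        Nat.choose_succ_succ' _ _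
      have pc : (n + m + 1).choose (2 * m + 2)
          = (n + m).choose (2 * m + 1) + (n + m).choose (2 * m + 2) :=
        Nat.choose_succ_succ' _ _
      have pd : (n + m + 1).choose (2 * m + 3)
          = (n + m).choose (2 * m + 2) + (n + m).choose (2 * m + 3) :=
        Nat.choose_succ_succ' _ _
      have pe : (n + 1 + m + 1).choose (2 * m + 3)
          = (n + m + 1).choose (2 * m + 2) + (n + m + 1).choose (2 * m + 3) := by
        have e : n + 1 + m + 1 = (n + m + 1) + 1 := by ring
        rw [e, Nat.choose_succ_succ']
      rw [pe, pc, pd, pb, pb']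
      have h1 := keyz (n + m) (2 * m)
      have h2 := keyz (n + m) (2 * m + 1)
      have h3 := keyz (n + m) (2 * m + 2)
      push_cast at h1 h2 h3 ⊢
      linear_combination
        (((n + m).choose (2 * m + 2) : ℤ)) * h1
        - (2 * ((n + m).choose (2 * m) : ℤ) + 2 * ((n + m).choose (2 * m + 1) : ℤ)) * h2
        - (((n + m).choose (2 * m) : ℤ)) * h3

/-- pointwise recursion for F -/
lemma pF (m k : ℕ) :
    ((k : ℤ) * (k + 1)) * Fz m k
      = (m : ℤ) * (m + 1) * Fz m k + (2 * (m : ℤ) + 1) ^ 2 * Gz m k := by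
  have h1 := keyz (k + m) (2 * m)
  have h2 := succz (k + m) (2 * m)
  simp only [Fz, Gz]
  push_cast at h1 h2 ⊢
  linear_combination
    (-(2 * (m : ℤ) + 1) * ((k + m + 1).choose (2 * m + 1) : ℤ)) * h1
    + (((k : ℤ) - m) * ((k + m).choose (2 * m) : ℤ)) * h2

/-- pointwise recursion for G -/
lemma pG (m k : ℕ) :
    ((k : ℤ) * (k + 1)) * Gz m k
      = (m : ℤ) * (m + 1) * Gz m k + (2 * (m : ℤ) + 2) ^ 2 * Fz (m + 1) k := by
  have h1 := keyz (k + m + 1) (2 * m + 1)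
  have h2 := succz (k + m) (2 * m + 1)
  simp only [Fz, Gz]
  have e : k + (m + 1) = k + m + 1 := by ring
  have e2 : 2 * (m + 1) = 2 * m + 2 := by ring
  rw [e, e2]
  push_cast at h1 h2 ⊢
  linear_combination
    (-(2 * (m : ℤ) + 2) * ((k + m + 1).choose (2 * m + 2) : ℤ)) * h1
    + (((k : ℤ) - m) * ((k + m + 1).choose (2 * m + 1) : ℤ)) * h2

/-- key factor identity: `(2m+1) C(2m,m) C(n+1+m, 2m+1) = (n+1) C(n+1+m, m) C(n, m)` -/
lemma hfacZ (n m : ℕ) :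
    (2 * (m : ℤ) + 1) * ((2 * m).choose m : ℤ) * ((n + 1 + m).choose (2 * m + 1) : ℤ)
      = ((n : ℤ) + 1) * ((n + 1 + m).choose m : ℤ) * (n.choose m : ℤ) := by
  have e1 : (2 * (m : ℤ) + 1) * ((2 * m).choose m : ℤ)
      = ((m : ℤ) + 1) * ((2 * m + 1).choose m : ℤ) := by
    have h := succz (2 * m) m
    have hs : (2 * m + 1).choose (m + 1) = (2 * m + 1).choose m := by
      have h2 := Nat.choose_symm (show m + 1 ≤ 2 * m + 1 by omega)
      simpa [show 2 * m + 1 - (m + 1) = m by omega] using h2.symm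
    rw [hs] at h
    push_cast at h ⊢
    linarith
  have e3 : ((m : ℤ) + 1) * ((n + 1).choose (m + 1) : ℤ)
      = ((n : ℤ) + 1) * (n.choose m : ℤ) := (succz n m).symm
  rcases le_or_gt m n with h | h
  · have e2n := Nat.choose_mul (n := n + 1 + m) (k := 2 * m + 1) (s := m)
      (by omega)
    have e2 := congrArg (fun x : ℕ => (x : ℤ)) e2n
    simp only [show n + 1 + m - m = n + 1 by omega, show 2 * m + 1 - m = m + 1 by omega] at e2
    push_cast at e2
    linear_combination ((n + 1 + m).choose (2 * m + 1) : ℤ) * e1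
      + ((m : ℤ) + 1) * e2 + ((n + 1 + m).choose m : ℤ) * e3
  · have z1 : (n + 1 + m).choose (2 * m + 1) = 0 :=
      Nat.choose_eq_zero_of_lt (by omega)
    have z2 : n.choose m = 0 := Nat.choose_eq_zero_of_lt h
    rw [z1, z2]
    push_cast
    ring

/-- the coefficient identity `(2m+1)(2m+2) C(2m,m) = (m+1)^2 C(2m+2, m+1)` -/
lemma hccZ (m : ℕ) :
    (2 * (m : ℤ) + 1) * (2 * (m : ℤ) + 2) * ((2 * m).choose m : ℤ)
      = ((m : ℤ) + 1) ^ 2 * ((2 * m + 2).choose (m + 1) : ℤ) := by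
  have e1 : (2 * (m : ℤ) + 1) * ((2 * m).choose m : ℤ)
      = ((m : ℤ) + 1) * ((2 * m + 1).choose m : ℤ) := by
    have h := succz (2 * m) m
    have hs : (2 * m + 1).choose (m + 1) = (2 * m + 1).choose m := by
      have h2 := Nat.choose_symm (show m + 1 ≤ 2 * m + 1 by omega)
      simpa [show 2 * m + 1 - (m + 1) = m by omega] using h2.symm
    rw [hs] at h
    push_cast at h ⊢
    linarith
  have e2 : (2 * (m : ℤ) + 2) * ((2 * m + 1).choose m : ℤ)
      = ((m : ℤ) + 1) * ((2 * m + 2).choose (m + 1) : ℤ) := by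
    have h := succz (2 * m + 1) m
    push_cast at h ⊢
    linarith
  linear_combination (2 * (m : ℤ) + 2) * e1 + ((m : ℤ) + 1) * e2

/-- main divisibility lemma, by induction on `r`. -/
lemma divXY (r : ℕ) : ∀ m n : ℕ,
    ((n : ℤ) ∣ ∑ k ∈ range n,
        (2 * (k : ℤ) + 1) * ((k : ℤ) * (k + 1)) ^ r * (((2 * m).choose m : ℤ) ^ 2 * Fz m k))
    ∧ ((n : ℤ) ∣ ∑ k ∈ range n,
        (2 * (k : ℤ) + 1) * ((k : ℤ) * (k + 1)) ^ r
          * ((2 * (m : ℤ) + 1) ^ 2 * ((2 * m).choose m : ℤ) ^ 2 * Gz m k)) := by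
  induction r with
  | zero =>
      intro m n
      rcases Nat.eq_zero_or_pos n with rfl | hn
      · simp
      obtain ⟨n', rfl⟩ : ∃ n', n = n' + 1 := ⟨n - 1, by omega⟩
      have hfac := hfacZ n' m
      constructor
      · have hs : ∑ k ∈ range (n' + 1),
            (2 * (k : ℤ) + 1) * ((k : ℤ) * (k + 1)) ^ 0 * (((2 * m).choose m : ℤ) ^ 2 * Fz m k)
            = ((2 * m).choose m : ℤ) ^ 2 * ∑ k ∈ range (n' + 1), (2 * (k : ℤ) + 1) * Fz m k := by
          rw [Finset.mul_sum]; apply Finset.sum_congr rfl; intro k _; ring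
        rw [hs, sumF]
        refine ⟨((2 * m).choose m : ℤ) * ((n' + 1 + m).choose (2 * m + 1) : ℤ)
            * (((n' + 1 + m).choose m : ℤ) * (n'.choose m : ℤ)), ?_⟩
        push_cast
        linear_combination
          (((2 * m).choose m : ℤ) * ((n' + 1 + m).choose (2 * m + 1) : ℤ)) * hfac
      · have hs : ∑ k ∈ range (n' + 1),
            (2 * (k : ℤ) + 1) * ((k : ℤ) * (k + 1)) ^ 0
              * ((2 * (m : ℤ) + 1) ^ 2 * ((2 * m).choose m : ℤ) ^ 2 * Gz m k)
            = (2 * (m : ℤ) + 1) ^ 2 * ((2 * m).choose m : ℤ) ^ 2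
              * ∑ k ∈ range (n' + 1), (2 * (k : ℤ) + 1) * Gz m k := by
          rw [Finset.mul_sum]; apply Finset.sum_congr rfl; intro k _; ring
        rw [hs, sumG]
        refine ⟨(2 * (m : ℤ) + 1) * ((2 * m).choose m : ℤ) * (2 * (m : ℤ) + 3)
            * ((n' + 1 + m + 1).choose (2 * m + 3) : ℤ)
            * (((n' + 1 + m).choose m : ℤ) * (n'.choose m : ℤ)), ?_⟩
        push_cast
        linear_combination
          ((2 * (m : ℤ) + 1) * ((2 * m).choose m : ℤ) * (2 * (m : ℤ) + 3)
            * ((n' + 1 + m + 1).choose (2 * m + 3) : ℤ)) * hfac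
  | succ r ih =>
      intro m n
      constructor
      · have hs : ∑ k ∈ range n,
            (2 * (k : ℤ) + 1) * ((k : ℤ) * (k + 1)) ^ (r + 1) * (((2 * m).choose m : ℤ) ^ 2 * Fz m k)
            = (m : ℤ) * (m + 1) * ∑ k ∈ range n,
                (2 * (k : ℤ) + 1) * ((k : ℤ) * (k + 1)) ^ r * (((2 * m).choose m : ℤ) ^ 2 * Fz m k)
              + ∑ k ∈ range n,
                (2 * (k : ℤ) + 1) * ((k : ℤ) * (k + 1)) ^ r
                  * ((2 * (m : ℤ) + 1) ^ 2 * ((2 * m).choose m : ℤ) ^ 2 * Gz m k) := by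
          rw [Finset.mul_sum, ← Finset.sum_add_distrib]
          apply Finset.sum_congr rfl
          intro k _
          have := pF m k
          rw [pow_succ]
          linear_combination
            ((2 * (k : ℤ) + 1) * ((k : ℤ) * (k + 1)) ^ r * ((2 * m).choose m : ℤ) ^ 2) * this
        rw [hs]
        exact dvd_add (Dvd.dvd.mul_left (ih m n).1 _) (ih m n).2
      · have hs : ∑ k ∈ range n,
            (2 * (k : ℤ) + 1) * ((k : ℤ) * (k + 1)) ^ (r + 1)
              * ((2 * (m : ℤ) + 1) ^ 2 * ((2 * m).choose m : ℤ) ^ 2 * Gz m k)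
            = (m : ℤ) * (m + 1) * ∑ k ∈ range n,
                (2 * (k : ℤ) + 1) * ((k : ℤ) * (k + 1)) ^ r
                  * ((2 * (m : ℤ) + 1) ^ 2 * ((2 * m).choose m : ℤ) ^ 2 * Gz m k)
              + ((m : ℤ) + 1) ^ 4 * ∑ k ∈ range n,
                (2 * (k : ℤ) + 1) * ((k : ℤ) * (k + 1)) ^ r
                  * (((2 * (m + 1)).choose (m + 1) : ℤ) ^ 2 * Fz (m + 1) k) := by
          rw [Finset.mul_sum, Finset.mul_sum, ← Finset.sum_add_distrib]
          apply Finset.sum_congr rfl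
          intro k _
          have hpg := pG m k
          have hcc := hccZ m
          have e2 : (2 * (m + 1)) = 2 * m + 2 := by ring
          rw [pow_succ, e2]
          -- need: (2k+1) t (k(k+1)) ((2m+1)^2 C^2 G) = m(m+1)(2k+1)t((2m+1)^2C^2G) + (2k+1)t(C'(m+1)^2 F')
          -- where (2m+1)^2 C^2 (2m+2)^2 = (m+1)^4 C'^2, i.e. hcc squared.
          have hcc2 : (2 * (m : ℤ) + 1) ^ 2 * ((2 * m).choose m : ℤ) ^ 2 * (2 * (m : ℤ) + 2) ^ 2
              = ((m : ℤ) + 1) ^ 4 * ((2 * m + 2).choose (m + 1) : ℤ) ^ 2 := by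
            linear_combination ((2 * (m : ℤ) + 1) * ((2 * m).choose m : ℤ) * (2 * (m : ℤ) + 2)
              + ((m : ℤ) + 1) ^ 2 * ((2 * m + 2).choose (m + 1) : ℤ)) * hcc
          linear_combination
            ((2 * (k : ℤ) + 1) * ((k : ℤ) * (k + 1)) ^ r * (2 * (m : ℤ) + 1) ^ 2
              * ((2 * m).choose m : ℤ) ^ 2) * hpg
            + ((2 * (k : ℤ) + 1) * ((k : ℤ) * (k + 1)) ^ r * Fz (m + 1) k) * hcc2
        rw [hs]
        exact dvd_add (Dvd.dvd.mul_left (ih m n).2 _) (Dvd.dvd.mul_left (ih (m + 1) n).1 _)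
  
theorem stmt0 (n : ℕ) (hn : 0 < n) (r : ℕ) :
    n ∣ ∑ k ∈ Finset.range n, (2 * k + 1) * k ^ r * (k + 1) ^ r * apery k := by
  rw [← Int.natCast_dvd_natCast]
  have hcast : ((∑ k ∈ Finset.range n, (2 * k + 1) * k ^ r * (k + 1) ^ r * apery k : ℕ) : ℤ)
      = ∑ k ∈ Finset.range n, ∑ m ∈ Finset.range n,
          (2 * (k : ℤ) + 1) * ((k : ℤ) * ((k : ℤ) + 1)) ^ r
            * (((2 * m).choose m : ℤ) ^ 2 * Fz m k) := by
    push_cast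
    refine Finset.sum_congr rfl fun k hk => ?_
    have ha : ((apery k : ℕ) : ℤ)
        = ∑ m ∈ Finset.range (k + 1),
            ((k + m).choose (2 * m) : ℤ) ^ 2 * ((2 * m).choose m : ℤ) ^ 2 := by
      unfold apery
      push_cast
      rfl
    calc (2 * (k : ℤ) + 1) * (k : ℤ) ^ r * ((k : ℤ) + 1) ^ r * ((apery k : ℕ) : ℤ)
        = ∑ m ∈ Finset.range (k + 1),
            (2 * (k : ℤ) + 1) * ((k : ℤ) * ((k : ℤ) + 1)) ^ r
              * (((2 * m).choose m : ℤ) ^ 2 * Fz m k) := by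
          rw [ha, Finset.mul_sum]
          refine Finset.sum_congr rfl fun m _ => ?_
          simp only [Fz]
          rw [mul_pow]
          ring
      _ = ∑ m ∈ Finset.range n,
            (2 * (k : ℤ) + 1) * ((k : ℤ) * ((k : ℤ) + 1)) ^ r
              * (((2 * m).choose m : ℤ) ^ 2 * Fz m k) := by
          refine Finset.sum_subset (Finset.range_subset_range.mpr ?_) fun m hm hnm => ?_
          · have := Finset.mem_range.mp hk
            omega
          · have hkm : k < m := by
              by_contra h
              exact hnm (Finset.mem_range.mpr (by omega))
            have hz : (k + m).choose (2 * m) = 0 :=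
              Nat.choose_eq_zero_of_lt (by omega)
            simp [Fz, hz]
  rw [hcast, Finset.sum_comm]
  exact dvd_sum fun m _ => (divXY r m n).1
end

section
/- For all positive integers n and nonnegative integers r, the sum over k from 0 to n-1 of (2k+1)^{2r+1}·A_k is divisible by n, where A_k is the k-th Apéry number. -/
open Nat Finset

private lemma fact_ne (m : ℕ) : ((m ! : ℚ)) ≠ 0 :=
  Nat.cast_ne_zero.mpr (Nat.factorial_ne_zero m)

set_option maxHeartbeats 1000000 in
/-- The one-step (Gosper) identity behind the closed form. -/
private lemma delta (n i j : ℕ) :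
    n * (Nat.choose (n-1) i * Nat.choose (n+j) j * Nat.choose (i+j) i * Nat.choose (n+i) (i+j+1))
      + (2*n+1) * (Nat.choose n i * Nat.choose (n+i) i * (Nat.choose n j * Nat.choose (n+j) j))
    = (n+1) * (Nat.choose n i * Nat.choose (n+j+1) j * Nat.choose (i+j) i *
        Nat.choose (n+i+1) (i+j+1)) := by
  rcases Nat.lt_or_ge n i with hi | hi
  · have z1 : Nat.choose n i = 0 := Nat.choose_eq_zero_of_lt hi
    have z2 : Nat.choose (n-1) i = 0 := Nat.choose_eq_zero_of_lt (by omega)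
    simp [z1, z2]
  rcases Nat.lt_or_ge n j with hj | hj
  · have z1 : Nat.choose n j = 0 := Nat.choose_eq_zero_of_lt hj
    have z2 : Nat.choose (n+i) (i+j+1) = 0 := Nat.choose_eq_zero_of_lt (by omega)
    have z3 : Nat.choose (n+i+1) (i+j+1) = 0 := Nat.choose_eq_zero_of_lt (by omega)
    simp [z1, z2, z3]
  -- main case : i ≤ n, j ≤ n
  have A1 : Nat.choose (n+i) (i+j+1) * (i+j+1) = Nat.choose (n+i) (i+j) * (n-j) := by
    rw [Nat.choose_succ_right_eq]; congr 1; omega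
  have A2 : Nat.choose (n+i+1) (i+j+1) * (i+j+1) = Nat.choose (n+i+1) (i+j) * (n+1-j) := by
    rw [Nat.choose_succ_right_eq]; congr 1; omega
  have A3 : n * Nat.choose (n-1) i = Nat.choose n i * (n-i) := by
    cases n with
    | zero => simp
    | succ m => rw [Nat.succ_sub_one, Nat.add_one_mul_choose_eq, Nat.choose_succ_right_eq]
  have key : (Nat.choose n i * (n-i)) * (Nat.choose (n+j) j * Nat.choose (i+j) i) *
        (Nat.choose (n+i) (i+j) * (n-j))
      + (2*n+1) * (Nat.choose n i * Nat.choose (n+i) i * (Nat.choose n j * Nat.choose (n+j) j))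
        * (i+j+1)
      = (n+1) * (Nat.choose n i * Nat.choose (n+j+1) j * Nat.choose (i+j) i) *
        (Nat.choose (n+i+1) (i+j) * (n+1-j)) := by
    have c1 : ((Nat.choose n i : ℕ) : ℚ) = n ! / (i ! * (n-i)!) := Nat.cast_choose ℚ hi
    have c2 : ((Nat.choose (n+j) j : ℕ) : ℚ) = (n+j)! / (j ! * n !) := by
      rw [Nat.cast_choose ℚ (by omega), show n+j-j = n from by omega]
    have c3 : ((Nat.choose (i+j) i : ℕ) : ℚ) = (i+j)! / (i ! * j !) := by
      rw [Nat.cast_choose ℚ (by omega), show i+j-i = j from by omega]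
    have c4 : ((Nat.choose (n+i) (i+j) : ℕ) : ℚ) = (n+i)! / ((i+j)! * (n-j)!) := by
      rw [Nat.cast_choose ℚ (by omega), show n+i-(i+j) = n-j from by omega]
    have c5 : ((Nat.choose n j : ℕ) : ℚ) = n ! / (j ! * (n-j)!) := Nat.cast_choose ℚ hj
    have c6 : ((Nat.choose (n+i) i : ℕ) : ℚ) = (n+i)! / (i ! * n !) := by
      rw [Nat.cast_choose ℚ (by omega), show n+i-i = n from by omega]
    have c7 : ((Nat.choose (n+j+1) j : ℕ) : ℚ) = (n+j+1)! / (j ! * (n+1)!) := by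
      rw [Nat.cast_choose ℚ (by omega), show n+j+1-j = n+1 from by omega]
    have c8 : ((Nat.choose (n+i+1) (i+j) : ℕ) : ℚ)
        = (n+i+1)! / ((i+j)! * (n+1-j)!) := by
      rw [Nat.cast_choose ℚ (by omega), show n+i+1-(i+j) = n+1-j from by omega]
    have f1 : (((n+j+1)! : ℕ) : ℚ) = (n+j+1) * (n+j)! := by
      rw [Nat.factorial_succ]; push_cast; ring
    have f2 : (((n+1)! : ℕ) : ℚ) = (n+1) * n ! := by
      rw [Nat.factorial_succ]; push_cast; ring
    have f3 : (((n+i+1)! : ℕ) : ℚ) = (n+i+1) * (n+i)! := by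
      rw [Nat.factorial_succ]; push_cast; ring
    have f4 : (((n+1-j)! : ℕ) : ℚ) = ((n:ℚ)+1-j) * (n-j)! := by
      rw [show n+1-j = (n-j)+1 from by omega, Nat.factorial_succ]
      push_cast [Nat.cast_sub hj]; ring
    qify [hi, hj, show j ≤ n+1 from by omega]
    rw [c1, c2, c3, c4, c5, c6, c7, c8, f1, f2, f3, f4]
    have hjq : (j:ℚ) ≤ n := by exact_mod_cast hj
    have h1 : ((n:ℚ)+1-j) ≠ 0 := by intro h; nlinarith
    field_simp
    ring
  calc (n * (Nat.choose (n-1) i * Nat.choose (n+j) j * Nat.choose (i+j) i *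
          Nat.choose (n+i) (i+j+1))
        + (2*n+1) * (Nat.choose n i * Nat.choose (n+i) i *
          (Nat.choose n j * Nat.choose (n+j) j)))
      = ((n * Nat.choose (n-1) i) * (Nat.choose (n+j) j * Nat.choose (i+j) i) *
          (Nat.choose (n+i) (i+j+1))
        + (2*n+1) * (Nat.choose n i * Nat.choose (n+i) i *
          (Nat.choose n j * Nat.choose (n+j) j))) := by ring
    _ = _ := by
      apply Nat.eq_of_mul_eq_mul_right (show 0 < i+j+1 by omega)
      calc ((n * Nat.choose (n-1) i) * (Nat.choose (n+j) j * Nat.choose (i+j) i) *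
            (Nat.choose (n+i) (i+j+1))
          + (2*n+1) * (Nat.choose n i * Nat.choose (n+i) i *
            (Nat.choose n j * Nat.choose (n+j) j))) * (i+j+1)
          = (n * Nat.choose (n-1) i) * (Nat.choose (n+j) j * Nat.choose (i+j) i) *
            (Nat.choose (n+i) (i+j+1) * (i+j+1))
          + (2*n+1) * (Nat.choose n i * Nat.choose (n+i) i *
            (Nat.choose n j * Nat.choose (n+j) j)) * (i+j+1) := by ring
        _ = (Nat.choose n i * (n-i)) * (Nat.choose (n+j) j * Nat.choose (i+j) i) *
            (Nat.choose (n+i) (i+j) * (n-j))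
          + (2*n+1) * (Nat.choose n i * Nat.choose (n+i) i *
            (Nat.choose n j * Nat.choose (n+j) j)) * (i+j+1) := by rw [A1, A3]
        _ = (n+1) * (Nat.choose n i * Nat.choose (n+j+1) j * Nat.choose (i+j) i) *
            (Nat.choose (n+i+1) (i+j) * (n+1-j)) := key
        _ = (n+1) * (Nat.choose n i * Nat.choose (n+j+1) j * Nat.choose (i+j) i) *
            (Nat.choose (n+i+1) (i+j+1) * (i+j+1)) := by rw [A2]
        _ = (n+1) * (Nat.choose n i * Nat.choose (n+j+1) j * Nat.choose (i+j) i *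
            Nat.choose (n+i+1) (i+j+1)) * (i+j+1) := by ring

/-- Closed form for the weighted sum. -/
private lemma star (i j n : ℕ) :
    ∑ k ∈ Finset.range n, (2*k+1) * (Nat.choose k i * Nat.choose (k+i) i *
        (Nat.choose k j * Nat.choose (k+j) j))
    = n * (Nat.choose (n-1) i * Nat.choose (n+j) j * Nat.choose (i+j) i *
        Nat.choose (n+i) (i+j+1)) := by
  induction n with
  | zero => simp
  | succ m ih =>
    rw [Finset.sum_range_succ, ih, delta m i j]
    rw [Nat.succ_sub_one, show m+1+j = m+j+1 from by omega, show m+1+i = m+i+1 from by omega]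

/-- The product recurrence step. -/
private lemma xb (k j : ℕ) :
    (j+1)^2 * (Nat.choose k (j+1) * Nat.choose (k+j+1) (j+1))
      + j*(j+1) * (Nat.choose k j * Nat.choose (k+j) j)
    = k*(k+1) * (Nat.choose k j * Nat.choose (k+j) j) := by
  rcases Nat.lt_or_ge k j with h | h
  · have z1 : Nat.choose k j = 0 := Nat.choose_eq_zero_of_lt h
    have z2 : Nat.choose k (j+1) = 0 := Nat.choose_eq_zero_of_lt (by omega)
    simp [z1, z2]
  · obtain ⟨d, rfl⟩ : ∃ d, k = j + d := ⟨k - j, by omega⟩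
    have a1 : Nat.choose (j+d) (j+1) * (j+1) = Nat.choose (j+d) j * d := by
      rw [Nat.choose_succ_right_eq, show j+d-j = d from by omega]
    have a2 : Nat.choose (j+d+j+1) (j+1) * (j+1) = (j+d+j+1) * Nat.choose (j+d+j) j := by
      simpa using (Nat.add_one_mul_choose_eq (j+d+j) j).symm
    have a3 : (j+1)^2 * (Nat.choose (j+d) (j+1) * Nat.choose (j+d+j+1) (j+1))
        = (d * (j+d+j+1)) * (Nat.choose (j+d) j * Nat.choose (j+d+j) j) := by
      calc (j+1)^2 * (Nat.choose (j+d) (j+1) * Nat.choose (j+d+j+1) (j+1))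
          = (Nat.choose (j+d) (j+1) * (j+1)) * (Nat.choose (j+d+j+1) (j+1) * (j+1)) := by
            ring
        _ = (Nat.choose (j+d) j * d) * ((j+d+j+1) * Nat.choose (j+d+j) j) := by
            rw [a1, a2]
        _ = (d * (j+d+j+1)) * (Nat.choose (j+d) j * Nat.choose (j+d+j) j) := by ring
    rw [a3]
    ring

/-- The main divisibility, for products of two binomial blocks. -/
private lemma pdvd (n r : ℕ) : ∀ i j : ℕ,
    n ∣ ∑ k ∈ Finset.range n, (2*k+1)^(2*r+1) * (Nat.choose k i * Nat.choose (k+i) i *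
      (Nat.choose k j * Nat.choose (k+j) j)) := by
  induction r with
  | zero =>
    intro i j
    simp only [show 2*0+1 = 1 from rfl, pow_one]
    exact ⟨_, star i j n⟩
  | succ r ih =>
    intro i j
    have e : ∀ k, (2*k+1)^(2*(r+1)+1) * (Nat.choose k i * Nat.choose (k+i) i *
          (Nat.choose k j * Nat.choose (k+j) j))
        = 4*(j+1)^2 * ((2*k+1)^(2*r+1) * (Nat.choose k i * Nat.choose (k+i) i *
            (Nat.choose k (j+1) * Nat.choose (k+(j+1)) (j+1))))
          + (4*(j*(j+1))+1) * ((2*k+1)^(2*r+1) * (Nat.choose k i * Nat.choose (k+i) i *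
            (Nat.choose k j * Nat.choose (k+j) j))) := by
      intro k
      have hx := xb k j
      have hkj : k+(j+1) = k+j+1 := by omega
      rw [hkj]
      calc (2*k+1)^(2*(r+1)+1) * (Nat.choose k i * Nat.choose (k+i) i *
            (Nat.choose k j * Nat.choose (k+j) j))
          = (2*k+1)^(2*r+1) * (Nat.choose k i * Nat.choose (k+i) i) *
            (4 * (k*(k+1) * (Nat.choose k j * Nat.choose (k+j) j))
              + (Nat.choose k j * Nat.choose (k+j) j)) := by ring
        _ = (2*k+1)^(2*r+1) * (Nat.choose k i * Nat.choose (k+i) i) *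
            (4 * ((j+1)^2 * (Nat.choose k (j+1) * Nat.choose (k+j+1) (j+1))
                + j*(j+1) * (Nat.choose k j * Nat.choose (k+j) j))
              + (Nat.choose k j * Nat.choose (k+j) j)) := by rw [hx]
        _ = _ := by ring
    rw [Finset.sum_congr rfl (fun k _ => e k), Finset.sum_add_distrib,
      ← Finset.mul_sum, ← Finset.mul_sum]
    exact dvd_add ((ih i (j+1)).mul_left _) ((ih i j).mul_left _)

private lemma apery_eq (k : ℕ) :
    apery k = ∑ m ∈ Finset.range (k+1), (Nat.choose k m * Nat.choose (k+m) m)^2 := by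
  unfold apery
  refine Finset.sum_congr rfl fun m hm => ?_
  have hmk : m ≤ k := by simpa [Nat.lt_succ_iff] using hm
  have tri : Nat.choose (k+m) (2*m) * Nat.choose (2*m) m
      = Nat.choose (k+m) m * Nat.choose k m := by
    have := Nat.choose_mul (n := k+m) (show m ≤ 2*m by omega)
    rwa [show k+m-m = k from by omega, show 2*m-m = m from by omega] at this
  calc Nat.choose (k+m) (2*m)^2 * Nat.choose (2*m) m^2
      = (Nat.choose (k+m) (2*m) * Nat.choose (2*m) m)^2 := by ring
    _ = (Nat.choose (k+m) m * Nat.choose k m)^2 := by rw [tri]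
    _ = (Nat.choose k m * Nat.choose (k+m) m)^2 := by ring

theorem stmt1 (n : ℕ) (hn : 0 < n) (r : ℕ) :
    n ∣ ∑ k ∈ Finset.range n, (2 * k + 1) ^ (2 * r + 1) * apery k := by
  have hA : ∀ k ∈ Finset.range n, (2 * k + 1) ^ (2 * r + 1) * apery k
      = ∑ m ∈ Finset.range n, (2*k+1)^(2*r+1) *
          (Nat.choose k m * Nat.choose (k+m) m * (Nat.choose k m * Nat.choose (k+m) m)) := by
    intro k hk
    have hkn : k < n := Finset.mem_range.mp hk
    have ext : apery k = ∑ m ∈ Finset.range n,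
        (Nat.choose k m * Nat.choose (k+m) m)^2 := by
      rw [apery_eq]
      refine Finset.sum_subset ?_ ?_
      · intro x hx
        simp only [Finset.mem_range] at *
        omega
      · intro m _ hm
        have : k < m := by simp only [Finset.mem_range, Nat.lt_succ_iff, not_le] at hm; exact hm
        simp [Nat.choose_eq_zero_of_lt this]
    rw [ext, Finset.mul_sum]
    refine Finset.sum_congr rfl fun m _ => ?_
    ring
  rw [Finset.sum_congr rfl hA, Finset.sum_comm]
  exact Finset.dvd_sum fun m _ => pdvd n r m m
end

section
/- For all positive integers n, nonnegative integers r, and ε ∈ {1, -1}, the sum over k from 0 to n-1 of ε^k·(2k+1)·k^r·(k+1)^r·D_k is divisible by n, where D_k is the k-th central Delannoy number. -/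
def delannoy (n : ℕ) : ℕ :=
  ∑ k ∈ Finset.range (n + 1), Nat.choose (n + k) (2 * k) * Nat.choose (2 * k) k

open Finset Nat

def CC (k j : ℕ) : ℤ := (Nat.choose (k + j) (2 * j) * Nat.choose (2 * j) j : ℕ)

def G1 (n j : ℕ) : ℤ := (Nat.choose (n + j) j * Nat.choose n (j + 1) : ℕ)

def G2 (n j : ℕ) : ℤ := (Nat.choose (n + j) j * Nat.choose (n - 1) j : ℕ)

lemma idA (k j : ℕ) :
    (k : ℤ) * (k + 1) * CC k j
      = (j : ℤ) * (j + 1) * CC k j + ((j : ℤ) + 1) ^ 2 * CC k (j + 1) := by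
  rcases lt_trichotomy k j with h | rfl | h
  · have h1 : k + j < 2 * j := by omega
    have h2 : k + (j + 1) < 2 * (j + 1) := by omega
    simp [CC, Nat.choose_eq_zero_of_lt h1, Nat.choose_eq_zero_of_lt h2]
  · have h2 : k + (k + 1) < 2 * (k + 1) := by omega
    simp only [CC, Nat.choose_eq_zero_of_lt h2, Nat.zero_mul, Nat.mul_zero, Nat.cast_zero,
      mul_zero, add_zero]
  · obtain ⟨d, rfl⟩ : ∃ d, k = j + 1 + d := ⟨k - (j + 1), by omega⟩
    have hq : ((j + 1 + d : ℕ) : ℚ) * ((j + 1 + d : ℕ) + 1) * ((CC (j+1+d) j : ℤ) : ℚ)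
        = (j : ℚ) * (j + 1) * ((CC (j+1+d) j : ℤ) : ℚ)
          + ((j : ℚ) + 1) ^ 2 * ((CC (j+1+d) (j+1) : ℤ) : ℚ) := by
      have e1 : j + 1 + d + j - 2 * j = d + 1 := by omega
      have e2 : 2 * j - j = j := by omega
      have e3 : j + 1 + d + (j + 1) - 2 * (j + 1) = d := by omega
      have e4 : 2 * (j + 1) - (j + 1) = j + 1 := by omega
      simp only [CC]
      push_cast [Nat.cast_choose ℚ (by omega : 2*j ≤ j+1+d+j),
        Nat.cast_choose ℚ (by omega : j ≤ 2*j),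
        Nat.cast_choose ℚ (by omega : 2*(j+1) ≤ j+1+d+(j+1)),
        Nat.cast_choose ℚ (by omega : j+1 ≤ 2*(j+1)), e1, e2, e3, e4]
      have f1 : j + 1 + d + (j + 1) = (j + 1 + d + j) + 1 := by omega
      have f2 : 2 * (j + 1) = (2 * j + 1) + 1 := by omega
      have f3 : (2 * j + 1) = (2 * j) + 1 := rfl
      rw [f1, f2, Nat.factorial_succ, Nat.factorial_succ, f3, Nat.factorial_succ,
        Nat.factorial_succ, Nat.factorial_succ]
      have h1 : ((j ! : ℚ)) ≠ 0 := by exact_mod_cast (Nat.factorial_pos j).ne'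
      have h2 : ((d ! : ℚ)) ≠ 0 := by exact_mod_cast (Nat.factorial_pos d).ne'
      have h3 : (((2*j) ! : ℚ)) ≠ 0 := by exact_mod_cast (Nat.factorial_pos (2*j)).ne'
      have h4 : (((j+1+d+j) ! : ℚ)) ≠ 0 := by exact_mod_cast (Nat.factorial_pos _).ne'
      push_cast
      field_simp
      ring
    exact_mod_cast hq

lemma spec (n : ℕ) : (n + 1) * Nat.choose (2 * n + 1) n = (2 * n + 1) * Nat.choose (2 * n) n := by
  have hs : Nat.choose (2*n+1) (2*n+1-n) = Nat.choose (2*n+1) n :=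
    Nat.choose_symm (by omega)
  have e : 2*n+1-n = n+1 := by omega
  rw [e] at hs
  have h2 := Nat.add_one_mul_choose_eq (2*n) n
  rw [hs] at h2
  rw [h2]
  ring

lemma step1 (n j : ℕ) :
    (2 * (n : ℤ) + 1) * CC n j + (n : ℤ) * G1 n j = ((n : ℤ) + 1) * G1 (n + 1) j := by
  rcases lt_trichotomy n j with h | rfl | h
  · have h1 : Nat.choose (n + j) (2 * j) = 0 := Nat.choose_eq_zero_of_lt (by omega)
    have h2 : Nat.choose n (j + 1) = 0 := Nat.choose_eq_zero_of_lt (by omega)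
    have h3 : Nat.choose (n + 1) (j + 1) = 0 := Nat.choose_eq_zero_of_lt (by omega)
    simp [CC, G1, h1, h2, h3]
  · have h2 : Nat.choose n (n + 1) = 0 := Nat.choose_eq_zero_of_lt (by omega)
    have e : Nat.choose (n + n) (2 * n) = 1 := by
      rw [show n + n = 2 * n by omega, Nat.choose_self]
    have e3 : Nat.choose (n + 1) (n + 1) = 1 := Nat.choose_self _
    simp only [CC, G1, h2, e, e3, Nat.mul_zero, Nat.mul_one, Nat.one_mul, Nat.cast_zero,
      mul_zero, add_zero]
    have key : (n+1) * Nat.choose (n+1+n) n = (2*n+1) * Nat.choose (2*n) n := by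
      rw [show n+1+n = 2*n+1 by omega, spec]
    have keyZ : ((n:ℤ)+1) * ((Nat.choose (n+1+n) n : ℕ) : ℤ)
        = (2*(n:ℤ)+1) * ((Nat.choose (2*n) n : ℕ) : ℤ) := by exact_mod_cast key
    linear_combination -keyZ
  · obtain ⟨d, rfl⟩ : ∃ d, n = j + 1 + d := ⟨n - (j + 1), by omega⟩
    simp only [CC, G1]
    have hq : (2 * ((j:ℚ) + 1 + d) + 1) *
          ((Nat.choose (j+1+d+j) (2*j) : ℚ) * (Nat.choose (2*j) j : ℚ))
        + ((j:ℚ) + 1 + d) * ((Nat.choose (j+1+d+j) j : ℚ) * (Nat.choose (j+1+d) (j+1) : ℚ))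
        = ((j:ℚ) + 1 + d + 1) *
          ((Nat.choose (j+1+d+1+j) j : ℚ) * (Nat.choose (j+1+d+1) (j+1) : ℚ)) := by
      rw [Nat.cast_choose ℚ (show 2*j ≤ j+1+d+j by omega),
        Nat.cast_choose ℚ (show j ≤ 2*j by omega),
        Nat.cast_choose ℚ (show j ≤ j+1+d+j by omega),
        Nat.cast_choose ℚ (show j+1 ≤ j+1+d by omega),
        Nat.cast_choose ℚ (show j ≤ j+1+d+1+j by omega),
        Nat.cast_choose ℚ (show j+1 ≤ j+1+d+1 by omega),
        show j+1+d+j - 2*j = d+1 by omega, show 2*j - j = j by omega,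
        show j+1+d+j - j = j+1+d by omega, show j+1+d - (j+1) = d by omega,
        show j+1+d+1+j - j = j+1+d+1 by omega, show j+1+d+1 - (j+1) = d+1 by omega]
      have g1 : (j+1+d+1+j)! = (j+1+d+1+j) * (j+1+d+j)! := by
        rw [show j+1+d+1+j = (j+1+d+j)+1 by omega, Nat.factorial_succ]
      have g2 : (j+1+d+1)! = (j+1+d+1) * (j+1+d)! := Nat.factorial_succ _
      have g3 : (j+1)! = (j+1) * j ! := Nat.factorial_succ _
      have g4 : (d+1)! = (d+1) * d ! := Nat.factorial_succ _
      rw [g1, g2, g3, g4]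
      have h1 : ((j ! : ℚ)) ≠ 0 := by exact_mod_cast (Nat.factorial_pos j).ne'
      have h2 : ((d ! : ℚ)) ≠ 0 := by exact_mod_cast (Nat.factorial_pos d).ne'
      have h3 : (((2*j) ! : ℚ)) ≠ 0 := by exact_mod_cast (Nat.factorial_pos (2*j)).ne'
      have h4 : (((j+1+d+j) ! : ℚ)) ≠ 0 := by exact_mod_cast (Nat.factorial_pos _).ne'
      have h5 : (((j+1+d) ! : ℚ)) ≠ 0 := by exact_mod_cast (Nat.factorial_pos _).ne'
      push_cast
      field_simp
      ring
    exact_mod_cast hq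

lemma step2 (n j : ℕ) :
    (2 * (n : ℤ) + 1) * CC n j = (n : ℤ) * G2 n j + ((n : ℤ) + 1) * G2 (n + 1) j := by
  rcases Nat.eq_zero_or_pos n with rfl | hn
  · rcases Nat.eq_zero_or_pos j with rfl | hj
    · simp [CC, G2]
    · have h1 : Nat.choose j (2*j) = 0 := Nat.choose_eq_zero_of_lt (by omega)
      have h2 : Nat.choose 0 j = 0 := Nat.choose_eq_zero_of_lt (by omega)
      simp [CC, G2, h1, h2]
  rcases lt_trichotomy n j with h | rfl | h
  · have h1 : Nat.choose (n + j) (2 * j) = 0 := Nat.choose_eq_zero_of_lt (by omega)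
    have h2 : Nat.choose (n - 1) j = 0 := Nat.choose_eq_zero_of_lt (by omega)
    have h3 : Nat.choose n j = 0 := Nat.choose_eq_zero_of_lt (by omega)
    have h4 : Nat.choose (n + 1 - 1) j = 0 := Nat.choose_eq_zero_of_lt (by omega)
    simp [CC, G2, h1, h2, h3, h4]
  · have h2 : Nat.choose (n - 1) n = 0 := Nat.choose_eq_zero_of_lt (by omega)
    have e : Nat.choose (n + n) (2 * n) = 1 := by
      rw [show n + n = 2 * n by omega, Nat.choose_self]
    have e3 : Nat.choose (n + 1 - 1) n = 1 := by
      rw [show n + 1 - 1 = n by omega, Nat.choose_self]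
    simp only [CC, G2, h2, e, e3, Nat.mul_zero, Nat.mul_one, Nat.one_mul, Nat.cast_zero,
      mul_zero, add_zero, zero_add]
    have key : (n+1) * Nat.choose (n+1+n) n = (2*n+1) * Nat.choose (2*n) n := by
      rw [show n+1+n = 2*n+1 by omega, spec]
    have keyZ : ((n:ℤ)+1) * ((Nat.choose (n+1+n) n : ℕ) : ℤ)
        = (2*(n:ℤ)+1) * ((Nat.choose (2*n) n : ℕ) : ℤ) := by exact_mod_cast key
    linear_combination -keyZ
  · obtain ⟨d, rfl⟩ : ∃ d, n = j + 1 + d := ⟨n - (j + 1), by omega⟩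
    simp only [CC, G2, show j+1+d - 1 = j+d by omega, show j+1+d+1 - 1 = j+1+d by omega]
    have hq : (2 * ((j:ℚ) + 1 + d) + 1) *
          ((Nat.choose (j+1+d+j) (2*j) : ℚ) * (Nat.choose (2*j) j : ℚ))
        = ((j:ℚ) + 1 + d) * ((Nat.choose (j+1+d+j) j : ℚ) * (Nat.choose (j+d) j : ℚ))
        + ((j:ℚ) + 1 + d + 1) *
          ((Nat.choose (j+1+d+1+j) j : ℚ) * (Nat.choose (j+1+d) j : ℚ)) := by
      rw [Nat.cast_choose ℚ (show 2*j ≤ j+1+d+j by omega),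
        Nat.cast_choose ℚ (show j ≤ 2*j by omega),
        Nat.cast_choose ℚ (show j ≤ j+1+d+j by omega),
        Nat.cast_choose ℚ (show j ≤ j+d by omega),
        Nat.cast_choose ℚ (show j ≤ j+1+d+1+j by omega),
        Nat.cast_choose ℚ (show j ≤ j+1+d by omega),
        show j+1+d+j - 2*j = d+1 by omega, show 2*j - j = j by omega,
        show j+1+d+j - j = j+1+d by omega, show j+d - j = d by omega,
        show j+1+d+1+j - j = j+1+d+1 by omega, show j+1+d - j = d+1 by omega]
      have g1 : (j+1+d+1+j)! = (j+1+d+1+j) * (j+1+d+j)! := by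
        rw [show j+1+d+1+j = (j+1+d+j)+1 by omega, Nat.factorial_succ]
      have g2 : (j+1+d+1)! = (j+1+d+1) * (j+1+d)! := Nat.factorial_succ _
      have g2' : (j+1+d)! = (j+1+d) * (j+d)! := by
        rw [show j+1+d = (j+d)+1 by omega, Nat.factorial_succ]
      have g4 : (d+1)! = (d+1) * d ! := Nat.factorial_succ _
      rw [g1, g2, g2', g4]
      have h1 : ((j ! : ℚ)) ≠ 0 := by exact_mod_cast (Nat.factorial_pos j).ne'
      have h2 : ((d ! : ℚ)) ≠ 0 := by exact_mod_cast (Nat.factorial_pos d).ne'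
      have h3 : (((2*j) ! : ℚ)) ≠ 0 := by exact_mod_cast (Nat.factorial_pos (2*j)).ne'
      have h4 : (((j+1+d+j) ! : ℚ)) ≠ 0 := by exact_mod_cast (Nat.factorial_pos _).ne'
      have h5 : (((j+d) ! : ℚ)) ≠ 0 := by exact_mod_cast (Nat.factorial_pos _).ne'
      push_cast
      field_simp
      ring
    exact_mod_cast hq

lemma base1 (n j : ℕ) :
    ∑ k ∈ Finset.range n, (2 * (k : ℤ) + 1) * CC k j = (n : ℤ) * G1 n j := by
  induction n with
  | zero => simp
  | succ m ih =>
    rw [Finset.sum_range_succ, ih]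
    push_cast
    linear_combination step1 m j

lemma base2 (n j : ℕ) :
    ∑ k ∈ Finset.range n, (-1 : ℤ) ^ k * (2 * (k : ℤ) + 1) * CC k j
      = (-1 : ℤ) ^ (n + 1) * (n : ℤ) * G2 n j := by
  induction n with
  | zero => simp
  | succ m ih =>
    rw [Finset.sum_range_succ, ih]
    push_cast
    linear_combination ((-1 : ℤ) ^ m) * step2 m j

lemma Qlem (n r : ℕ) (ε : ℤ) (hε : ε = 1 ∨ ε = -1) : ∀ j : ℕ,
    (n : ℤ) ∣ ∑ k ∈ Finset.range n,
      ε ^ k * (2 * (k : ℤ) + 1) * ((k : ℤ) * ((k : ℤ) + 1)) ^ r * CC k j := by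
  induction r with
  | zero =>
    intro j
    simp only [pow_zero, mul_one]
    rcases hε with rfl | rfl
    · simp only [one_pow, one_mul]
      rw [base1]
      exact ⟨G1 n j, rfl⟩
    · rw [base2]
      exact ⟨(-1 : ℤ) ^ (n + 1) * G2 n j, by ring⟩
  | succ r ih =>
    intro j
    have split : ∀ k ∈ Finset.range n,
        ε ^ k * (2 * (k : ℤ) + 1) * ((k : ℤ) * ((k : ℤ) + 1)) ^ (r + 1) * CC k j
          = (j : ℤ) * ((j : ℤ) + 1) *
              (ε ^ k * (2 * (k : ℤ) + 1) * ((k : ℤ) * ((k : ℤ) + 1)) ^ r * CC k j)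
            + ((j : ℤ) + 1) ^ 2 *
              (ε ^ k * (2 * (k : ℤ) + 1) * ((k : ℤ) * ((k : ℤ) + 1)) ^ r * CC k (j + 1)) := by
      intro k _
      linear_combination (ε ^ k * (2 * (k : ℤ) + 1) * ((k : ℤ) * ((k : ℤ) + 1)) ^ r) * idA k j
    rw [Finset.sum_congr rfl split, Finset.sum_add_distrib, ← Finset.mul_sum, ← Finset.mul_sum]
    exact dvd_add (Dvd.dvd.mul_left (ih j) _) (Dvd.dvd.mul_left (ih (j + 1)) _)

lemma del_eq (n k : ℕ) (hk : k < n) : (delannoy k : ℤ) = ∑ j ∈ Finset.range n, CC k j := by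
  have h : delannoy k = ∑ j ∈ Finset.range n,
      Nat.choose (k + j) (2 * j) * Nat.choose (2 * j) j := by
    rw [delannoy]
    apply Finset.sum_subset (Finset.range_subset_range.mpr (by omega))
    intro j _ hj
    have hkj : k + j < 2 * j := by
      have := Finset.mem_range.not.mp hj
      omega
    rw [Nat.choose_eq_zero_of_lt hkj, Nat.zero_mul]
  rw [h]
  push_cast [CC]
  rfl


theorem stmt2 (n : ℕ) (hn : 0 < n) (r : ℕ) (ε : ℤ) (hε : ε = 1 ∨ ε = -1) :
    (n : ℤ) ∣ ∑ k ∈ Finset.range n,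
      ε ^ k * (2 * (k : ℤ) + 1) * (k : ℤ) ^ r * ((k : ℤ) + 1) ^ r * delannoy k := by
  have hsum : ∀ k ∈ Finset.range n,
      ε ^ k * (2 * (k : ℤ) + 1) * (k : ℤ) ^ r * ((k : ℤ) + 1) ^ r * (delannoy k : ℤ)
        = ∑ j ∈ Finset.range n,
            ε ^ k * (2 * (k : ℤ) + 1) * ((k : ℤ) * ((k : ℤ) + 1)) ^ r * CC k j := by
    intro k hk
    rw [del_eq n k (Finset.mem_range.mp hk), Finset.mul_sum]
    refine Finset.sum_congr rfl fun j _ => ?_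
    rw [mul_pow]
    ring
  rw [Finset.sum_congr rfl hsum, Finset.sum_comm]
  exact Finset.dvd_sum fun j _ => Qlem n r ε hε j
end

section
/- For all positive integers n, nonnegative integers r, and ε ∈ {1, -1}, the sum over k from 0 to n-1 of ε^k·(2k+1)^{2r+1}·D_k is divisible by n, where D_k is the k-th central Delannoy number. -/
namespace Stmt3Aux

/-- `g j k = C(k+j, j) * C(k, j)` as an integer. -/
def g (j k : ℕ) : ℤ := ((k + j).choose j : ℤ) * (k.choose j : ℤ)

lemma g_eq_zero_of_lt {j k : ℕ} (h : k < j) : g j k = 0 := by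
  simp [g, Nat.choose_eq_zero_of_lt h]

lemma subsub (k j : ℕ) :
    (k + j).choose (2 * j) * (2 * j).choose j = (k + j).choose j * k.choose j := by
  rcases le_or_gt j k with h | h
  · have h1 : 2 * j ≤ k + j := by omega
    have h2 := Nat.choose_mul (n := k + j) (by omega : j ≤ 2 * j)
    rw [show k + j - j = k by omega, show 2 * j - j = j by omega] at h2
    exact h2
  · rw [Nat.choose_eq_zero_of_lt (by omega : k + j < 2 * j),
      Nat.choose_eq_zero_of_lt h]
    ring

lemma key_sq (j k : ℕ) :
    (2 * (k : ℤ) + 1) ^ 2 * g j k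
      = 4 * ((j : ℤ) + 1) ^ 2 * g (j + 1) k + (2 * (j : ℤ) + 1) ^ 2 * g j k := by
  rcases le_or_gt (j + 1) k with h | h
  · have F2 : ((j : ℤ) + 1) * ((k + (j + 1)).choose (j + 1) : ℤ)
        = ((k : ℤ) + j + 1) * ((k + j).choose j : ℤ) := by
      have h2 := Nat.add_one_mul_choose_eq (k + j) j
      have h3 := congrArg (Nat.cast (R := ℤ)) h2
      push_cast at h3
      rw [show k + (j + 1) = k + j + 1 by ring]
      linarith [h3]
    have F3 : ((j : ℤ) + 1) * (k.choose (j + 1) : ℤ)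
        = (k.choose j : ℤ) * ((k : ℤ) - j) := by
      have h2 := Nat.choose_succ_right_eq k j
      have h3 := congrArg (Nat.cast (R := ℤ)) h2
      have h4 : ((k - j : ℕ) : ℤ) = (k : ℤ) - j := by
        rw [Nat.cast_sub (by omega : j ≤ k)]
      push_cast [h4] at h3
      linarith [h3]
    unfold g
    linear_combination (-4 * ((j : ℤ) + 1) * (k.choose (j + 1) : ℤ)) * F2
      + (-4 * ((k : ℤ) + (j : ℤ) + 1) * ((k + j).choose j : ℤ)) * F3
  · rcases lt_or_eq_of_le (by omega : k ≤ j) with hk | hk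
    · rw [g_eq_zero_of_lt hk, g_eq_zero_of_lt (by omega)]
      ring
    · subst hk
      rw [g_eq_zero_of_lt (by omega : k < k + 1)]
      ring

lemma sumA (j n : ℕ) :
    ∑ k ∈ Finset.range n, (2 * (k : ℤ) + 1) * g j k
      = (n : ℤ) * ((2 * j + 1).choose j : ℤ) * ((n + j).choose (2 * j + 1) : ℤ) := by
  induction n with
  | zero => simp
  | succ n ih =>
    rw [Finset.sum_range_succ, ih]
    have hpascal : ((n + 1 + j).choose (2 * j + 1) : ℤ)
        = ((n + j).choose (2 * j) : ℤ) + ((n + j).choose (2 * j + 1) : ℤ) := by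
      have h2 : (n + 1 + j).choose (2 * j + 1)
          = (n + j).choose (2 * j) + (n + j).choose (2 * j + 1) := by
        rw [show n + 1 + j = (n + j) + 1 by ring]
        exact Nat.choose_succ_succ' (n + j) (2 * j)
      exact_mod_cast congrArg (Nat.cast (R := ℤ)) h2
    rcases lt_or_ge n j with h | h
    · rw [g_eq_zero_of_lt h, hpascal,
        Nat.choose_eq_zero_of_lt (by omega : n + j < 2 * j),
        Nat.choose_eq_zero_of_lt (by omega : n + j < 2 * j + 1)]
      push_cast
      ring
    · -- j ≤ n
      have F1 : (2 * (j : ℤ) + 1) * ((n + j).choose (2 * j + 1) : ℤ)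
          = ((n + j).choose (2 * j) : ℤ) * ((n : ℤ) - (j : ℤ)) := by
        have h2 := Nat.choose_succ_right_eq (n + j) (2 * j)
        have h3 := congrArg (Nat.cast (R := ℤ)) h2
        have h4 : ((n + j - 2 * j : ℕ) : ℤ) = (n : ℤ) - j := by
          rw [show n + j - 2 * j = n - j by omega, Nat.cast_sub h]
        push_cast [h4] at h3
        linarith [h3]
      have F2 : ((j : ℤ) + 1) * ((2 * j + 1).choose j : ℤ)
          = (2 * (j : ℤ) + 1) * ((2 * j).choose j : ℤ) := by
        have h2 := Nat.add_one_mul_choose_eq (2 * j) j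
        have hsymm : (2 * j + 1).choose (j + 1) = (2 * j + 1).choose j := by
          have h5 := Nat.choose_symm (by omega : j ≤ 2 * j + 1)
          rwa [show 2 * j + 1 - j = j + 1 by omega] at h5
        have h3 := congrArg (Nat.cast (R := ℤ)) h2
        push_cast [hsymm] at h3
        linarith [h3]
      have F3 : ((n + j).choose (2 * j) : ℤ) * ((2 * j).choose j : ℤ)
          = ((n + j).choose j : ℤ) * (n.choose j : ℤ) := by
        exact_mod_cast congrArg (Nat.cast (R := ℤ)) (subsub n j)
      have hne : (2 * (j : ℤ) + 1) * ((j : ℤ) + 1) ≠ 0 := by positivity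
      apply mul_left_cancel₀ hne
      unfold g
      rw [hpascal]
      push_cast
      linear_combination (-((j : ℤ) + 1) * ((2 * j + 1).choose j : ℤ)) * F1
        + (-((((n : ℤ) - j) + ((n : ℤ) + 1) * (2 * (j : ℤ) + 1))
            * ((n + j).choose (2 * j) : ℤ))) * F2
        + (-((((n : ℤ) - j) + ((n : ℤ) + 1) * (2 * (j : ℤ) + 1))
            * (2 * (j : ℤ) + 1))) * F3

lemma sumB (j n : ℕ) :
    ∑ k ∈ Finset.range n, (-1 : ℤ) ^ k * (2 * (k : ℤ) + 1) * g j k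
      = (-1 : ℤ) ^ (n + 1) * (n : ℤ) * ((n + j).choose j : ℤ) * ((n - 1).choose j : ℤ) := by
  induction n with
  | zero => simp
  | succ n ih =>
    rw [Finset.sum_range_succ, ih]
    have hstep : (2 * (n : ℤ) + 1) * g j n
        = ((n : ℤ) + 1) * ((n + 1 + j).choose j : ℤ) * (n.choose j : ℤ)
          + (n : ℤ) * ((n + j).choose j : ℤ) * ((n - 1).choose j : ℤ) := by
      rcases lt_or_ge n j with h | h
      · rw [g_eq_zero_of_lt h, Nat.choose_eq_zero_of_lt h,
          Nat.choose_eq_zero_of_lt (by omega : n - 1 < j)]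
        push_cast
        ring
      · -- j ≤ n
        rcases Nat.eq_zero_or_pos n with hn0 | hn0
        · subst hn0
          have hj0 : j = 0 := by omega
          subst hj0
          simp [g]
        · have F4 : ((n : ℤ) + 1) * ((n + 1 + j).choose j : ℤ)
              = ((n : ℤ) + (j : ℤ) + 1) * ((n + j).choose j : ℤ) := by
            have h2 := Nat.add_one_mul_choose_eq (n + j) n
            have hs1 : (n + j).choose n = (n + j).choose j := by
              have h5 := Nat.choose_symm (by omega : j ≤ n + j)
              rwa [show n + j - j = n by omega] at h5
            have hs2 : (n + j).succ.choose n.succ = (n + 1 + j).choose j := by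
              have h5 := Nat.choose_symm (by omega : j ≤ n + 1 + j)
              rw [show n + 1 + j - j = n + 1 by omega] at h5
              rw [show (n + j).succ = n + 1 + j by omega, show n.succ = n + 1 by omega]
              exact h5
            rw [hs1, hs2] at h2
            have h3 := congrArg (Nat.cast (R := ℤ)) h2
            push_cast at h3
            linarith [h3]
          have F5 : (n : ℤ) * ((n - 1).choose j : ℤ)
              = ((j : ℤ) + 1) * (n.choose (j + 1) : ℤ) := by
            have h2 := Nat.add_one_mul_choose_eq (n - 1) j
            rw [show n - 1 + 1 = n by omega] at h2
            have h3 := congrArg (Nat.cast (R := ℤ)) h2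
            push_cast at h3
            linarith [h3]
          have F6 : ((j : ℤ) + 1) * (n.choose (j + 1) : ℤ)
              = (n.choose j : ℤ) * ((n : ℤ) - (j : ℤ)) := by
            have h2 := Nat.choose_succ_right_eq n j
            have h3 := congrArg (Nat.cast (R := ℤ)) h2
            have h4 : ((n - j : ℕ) : ℤ) = (n : ℤ) - j := by rw [Nat.cast_sub h]
            push_cast [h4] at h3
            linarith [h3]
          unfold g
          linear_combination (-(n.choose j : ℤ)) * F4
            + (-((n + j).choose j : ℤ)) * F5 + (-((n + j).choose j : ℤ)) * F6
    rw [show n + 1 - 1 = n by omega]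
    push_cast
    linear_combination ((-1 : ℤ) ^ n) * hstep

lemma dvd_V (n j : ℕ) (ε : ℤ) (hε : ε = 1 ∨ ε = -1) :
    (n : ℤ) ∣ ∑ k ∈ Finset.range n, ε ^ k * (2 * (k : ℤ) + 1) * g j k := by
  rcases hε with rfl | rfl
  · simp only [one_pow, one_mul]
    rw [sumA]
    exact ⟨((2 * j + 1).choose j : ℤ) * ((n + j).choose (2 * j + 1) : ℤ), by ring⟩
  · rw [sumB]
    exact ⟨(-1 : ℤ) ^ (n + 1) * ((n + j).choose j : ℤ) * ((n - 1).choose j : ℤ), by ring⟩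

lemma dvd_S (n : ℕ) (ε : ℤ) (hε : ε = 1 ∨ ε = -1) (r : ℕ) : ∀ j : ℕ,
    (n : ℤ) ∣ ∑ k ∈ Finset.range n, ε ^ k * (2 * (k : ℤ) + 1) ^ (2 * r + 1) * g j k := by
  induction r with
  | zero =>
    intro j
    simpa using dvd_V n j ε hε
  | succ r ih =>
    intro j
    have hterm : ∀ k : ℕ, ε ^ k * (2 * (k : ℤ) + 1) ^ (2 * (r + 1) + 1) * g j k
        = 4 * ((j : ℤ) + 1) ^ 2 * (ε ^ k * (2 * (k : ℤ) + 1) ^ (2 * r + 1) * g (j + 1) k)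
          + (2 * (j : ℤ) + 1) ^ 2 * (ε ^ k * (2 * (k : ℤ) + 1) ^ (2 * r + 1) * g j k) := by
      intro k
      have h := key_sq j k
      have hpow : (2 * (k : ℤ) + 1) ^ (2 * (r + 1) + 1)
          = (2 * (k : ℤ) + 1) ^ (2 * r + 1) * (2 * (k : ℤ) + 1) ^ 2 := by
        rw [show 2 * (r + 1) + 1 = (2 * r + 1) + 2 by omega, pow_add]
      rw [hpow]
      linear_combination (ε ^ k * (2 * (k : ℤ) + 1) ^ (2 * r + 1)) * h
    rw [Finset.sum_congr rfl (fun k _ => hterm k), Finset.sum_add_distrib,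
      ← Finset.mul_sum, ← Finset.mul_sum]
    exact dvd_add (Dvd.dvd.mul_left (ih (j + 1)) _) (Dvd.dvd.mul_left (ih j) _)

end Stmt3Aux

theorem stmt3 (n : ℕ) (hn : 0 < n) (r : ℕ) (ε : ℤ) (hε : ε = 1 ∨ ε = -1) :
    (n : ℤ) ∣ ∑ k ∈ Finset.range n,
      ε ^ k * (2 * (k : ℤ) + 1) ^ (2 * r + 1) * delannoy k := by
  have hD : ∀ k : ℕ, (delannoy k : ℤ) = ∑ j ∈ Finset.range (k + 1), Stmt3Aux.g j k := by
    intro k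
    unfold delannoy Stmt3Aux.g
    push_cast
    exact Finset.sum_congr rfl fun j _ => by exact_mod_cast Stmt3Aux.subsub k j
  have hmain : ∑ k ∈ Finset.range n, ε ^ k * (2 * (k : ℤ) + 1) ^ (2 * r + 1) * delannoy k
      = ∑ j ∈ Finset.range n, ∑ k ∈ Finset.range n,
          ε ^ k * (2 * (k : ℤ) + 1) ^ (2 * r + 1) * Stmt3Aux.g j k := by
    rw [Finset.sum_comm]
    refine Finset.sum_congr rfl fun k hk => ?_
    rw [hD, Finset.mul_sum]
    refine Finset.sum_subset (Finset.range_subset_range.2 (Finset.mem_range.1 hk)) ?_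
    intro j _ hj
    simp only [Finset.mem_range, not_lt] at hj
    rw [Stmt3Aux.g_eq_zero_of_lt (by omega)]
    ring
  rw [hmain]
  exact Finset.dvd_sum fun j _ => Stmt3Aux.dvd_S n ε hε r j
end

section
/- For every prime p > 3, the sum over k from 0 to p-1 of (2k+1)^3·A_k is congruent to p^3 modulo 2p^6, where A_k is the k-th Apéry number. -/
open Finset Nat

/-- product ∏_{i=1}^{j} (p² - i²) -/
def xprod (p j : ℕ) : ℕ := ∏ i ∈ range j, (p^2 - (i+1)^2)

/-- cleared-denominator generalized harmonic sum ∑_{i=1}^{j} (j!/i)² -/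
def hsum (j : ℕ) : ℕ := ∑ i ∈ range j, (j ! / (i+1))^2

lemma key_id (j : ℕ) : ∀ n : ℕ,
    ((j:ℚ)+1) * ∑ k ∈ range n, (2*(k:ℚ)+1)^3 * ((k+j).choose (2*j))^2
      = (2*(j:ℚ)+1)^2 * (2*(n:ℚ)^2 - (j:ℚ) - 1) * (((n+j).choose (2*j+1) : ℚ))^2 := by
  intro n
  induction n with
  | zero =>
    simp [Nat.choose_eq_zero_of_lt (by omega : j < 2*j+1)]
  | succ n ih =>
    rw [sum_range_succ, mul_add, ih]
    rcases lt_or_ge n j with h | h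
    · have h1 : (n+j).choose (2*j) = 0 := Nat.choose_eq_zero_of_lt (by omega)
      have h2 : (n+1+j).choose (2*j+1) = 0 := Nat.choose_eq_zero_of_lt (by omega)
      have h3 : (n+j).choose (2*j+1) = 0 := Nat.choose_eq_zero_of_lt (by omega)
      rw [h1, h2, h3]
      push_cast
      ring
    · have hpas : ((n+1+j).choose (2*j+1) : ℚ)
          = ((n+j).choose (2*j) : ℚ) + ((n+j).choose (2*j+1) : ℚ) := by
        rw [show n+1+j = (n+j)+1 from by omega, Nat.choose_succ_succ]
        push_cast; ring
      set a : ℚ := ((n+j).choose (2*j+1) : ℚ) with ha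
      set b : ℚ := ((n+j).choose (2*j) : ℚ) with hb
      have hrel : a * (2*(j:ℚ)+1) = b * ((n:ℚ)-(j:ℚ)) := by
        have h' : (n+j).choose (2*j+1) * (2*j+1) = (n+j).choose (2*j) * (n - j) := by
          rw [Nat.choose_succ_right_eq]; congr 1; omega
        have hc := congrArg (Nat.cast (R := ℚ)) h'
        push_cast [Nat.cast_sub h] at hc
        convert hc using 2 <;> push_cast <;> ring
      rw [hpas]
      push_cast
      linear_combination (-(2*(2*(j:ℚ)+1)*(2*(n:ℚ)+1)*a
        + (2*(2*(j:ℚ)+1)*(2*((n:ℚ)+1)^2-(j:ℚ)-1)+2*((n:ℚ)-(j:ℚ))*(2*(n:ℚ)+1))*b)) * hrel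

lemma swap_id (p : ℕ) :
    ∑ k ∈ range p, (2*k+1)^3 * apery k
      = ∑ j ∈ range p, (((2*j).choose j)^2 * ∑ k ∈ range p, (2*k+1)^3 * ((k+j).choose (2*j))^2) := by
  unfold apery
  have h1 : ∀ k ∈ range p, (2*k+1)^3 * ∑ j ∈ range (k+1), ((k+j).choose (2*j))^2 * ((2*j).choose j)^2
      = ∑ j ∈ range p, (2*k+1)^3 * (((k+j).choose (2*j))^2 * ((2*j).choose j)^2) := by
    intro k hk
    rw [mem_range] at hk
    rw [← mul_sum]
    congr 1
    apply sum_subset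
    · intro x hx; rw [mem_range] at *; omega
    · intro x hx hx'
      rw [mem_range] at *
      have : (k+x).choose (2*x) = 0 := Nat.choose_eq_zero_of_lt (by omega)
      rw [this]; ring
  rw [sum_congr rfl h1, sum_comm]
  apply sum_congr rfl
  intro j _
  rw [mul_sum]
  apply sum_congr rfl
  intro k _
  ring

lemma choose_eq (p : ℕ) : ∀ j : ℕ, j < p →
    (p+j).choose (2*j+1) * (2*j+1)! = p * xprod p j := by
  have key : ∀ j : ℕ, j < p → (p+j).descFactorial (2*j+1) = p * xprod p j := by
    intro j
    induction j with
    | zero => intro _; simp [xprod, Nat.descFactorial]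
    | succ j ih =>
      intro hj
      have hj' : j < p := by omega
      have hd : ∀ m t : ℕ, m.descFactorial t = ∏ i ∈ range t, (m - i) :=
        Nat.descFactorial_eq_prod_range
      rw [hd] at *
      have e1 : (2*(j+1)+1) = (2*j+1) + 1 + 1 := by omega
      rw [e1, prod_range_succ, prod_range_succ']
      have e3 : (∏ i ∈ range (2*j+1), (p + (j+1) - (i+1))) = ∏ i ∈ range (2*j+1), (p + j - i) :=
        prod_congr rfl (fun i hi => by have := mem_range.mp hi; omega)
      rw [e3, ih hj']
      have e4 : p + (j+1) - (2*j+1+1) = p - (j+1) := by omega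
      have e5 : p + (j+1) - 0 = p + (j+1) := by omega
      rw [e4, e5]
      have e6 : xprod p (j+1) = xprod p j * (p^2 - (j+1)^2) := by
        unfold xprod; rw [prod_range_succ]
      rw [e6]
      have e7 : (p + (j+1)) * (p - (j+1)) = p^2 - (j+1)^2 := by
        have h1 : j+1 ≤ p := by omega
        have h2 : (j+1)^2 ≤ p^2 := Nat.pow_le_pow_left h1 2
        zify [h1, h2]
        ring
      calc p * xprod p j * (p + (j+1)) * (p - (j+1))
          = p * (xprod p j * ((p + (j+1)) * (p - (j+1)))) := by ring
        _ = p * (xprod p j * (p^2 - (j+1)^2)) := by rw [e7]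
  intro j hj
  have := Nat.descFactorial_eq_factorial_mul_choose (p+j) (2*j+1)
  rw [← key j hj, this]; ring

lemma main_nat (p j : ℕ) (hj : j < p) :
    (j+1) * (j !)^4 * (((2*j).choose j)^2 * ∑ k ∈ range p, (2*k+1)^3 * ((k+j).choose (2*j))^2)
      = (2*p^2 - (j+1)) * p^2 * (xprod p j)^2 := by
  have hle : j + 1 ≤ 2*p^2 := by nlinarith
  apply Nat.cast_inj (R := ℚ) |>.mp
  push_cast [Nat.cast_sub hle]
  have h1 := key_id j p
  have hn : (2*j).choose j * j ! * j ! * (2*j+1) = (2*j+1)! := by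
    have h := Nat.choose_mul_factorial_mul_factorial (show j ≤ 2*j by omega)
    rw [show 2*j - j = j from by omega] at h
    have : (2*j+1)! = (2*j+1) * (2*j)! := Nat.factorial_succ (2*j)
    rw [this, ← h]; ring
  have h2 : ((2*j).choose j : ℚ) * (2*(j:ℚ)+1) * ((j ! : ℕ) : ℚ)^2 = (((2*j+1)! : ℕ) : ℚ) := by
    have := congrArg (Nat.cast (R:=ℚ)) hn
    push_cast at this
    linear_combination this
  have h3 : ((p+j).choose (2*j+1) : ℚ) * (((2*j+1)! : ℕ) : ℚ) = (p:ℚ) * (xprod p j : ℚ) := by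
    exact_mod_cast congrArg (Nat.cast (R:=ℚ)) (choose_eq p j hj)
  set A : ℚ := ((p+j).choose (2*j+1) : ℚ)
  set C : ℚ := ((2*j).choose j : ℚ)
  set F : ℚ := (((2*j+1)! : ℕ) : ℚ)
  set X : ℚ := (xprod p j : ℚ)
  set J : ℚ := ((j ! : ℕ) : ℚ)
  linear_combination (J^4*C^2) * h1
    + ((2*(p:ℚ)^2-(j:ℚ)-1)*A^2*(C*(2*(j:ℚ)+1)*J^2 + F)) * h2
    + ((2*(p:ℚ)^2-(j:ℚ)-1)*(A*F + (p:ℚ)*X)) * h3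

lemma hsum_succ (j : ℕ) : hsum (j+1) = (j+1)^2 * hsum j + (j !)^2 := by
  unfold hsum
  rw [sum_range_succ]
  have last : (j+1)! / (j+1) = j ! := by
    rw [Nat.factorial_succ, Nat.mul_div_cancel_left _ (Nat.succ_pos j)]
  rw [last]
  congr 1
  rw [mul_sum]
  apply sum_congr rfl
  intro i hi
  have hi' : i < j := mem_range.mp hi
  have hdvd : (i+1) ∣ j ! := Nat.dvd_factorial (Nat.succ_pos i) (by omega)
  rw [Nat.factorial_succ, Nat.mul_div_assoc (j+1) hdvd]
  ring

lemma xsq (p : ℕ) : ∀ j : ℕ, j ≤ p → ∃ z : ℤ,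
    ((xprod p j : ℕ) : ℤ)^2
      = ((j ! : ℕ) : ℤ)^4 - 2*(p:ℤ)^2*((j ! : ℕ):ℤ)^2*(hsum j : ℤ) + (p:ℤ)^4 * z := by
  intro j
  induction j with
  | zero => intro _; exact ⟨0, by simp [xprod, hsum]⟩
  | succ j ih =>
    intro hj
    obtain ⟨z, hz⟩ := ih (by omega)
    have hle : (j+1)^2 ≤ p^2 := Nat.pow_le_pow_left (by omega) 2
    have hx : ((xprod p (j+1) : ℕ) : ℤ)
        = (xprod p j : ℤ) * ((p:ℤ)^2 - ((j:ℤ)+1)^2) := by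
      unfold xprod
      rw [prod_range_succ]
      push_cast [Nat.cast_sub hle]
      ring
    have hy := congrArg (Nat.cast (R := ℤ)) (hsum_succ j)
    push_cast at hy
    refine ⟨((j ! : ℕ):ℤ)^4 + 4*((j ! : ℕ):ℤ)^2*(hsum j : ℤ)*((j:ℤ)+1)^2 + z*((j:ℤ)+1)^4
      - 2*(p:ℤ)^2*((j ! : ℕ):ℤ)^2*(hsum j : ℤ) - 2*(p:ℤ)^2*z*((j:ℤ)+1)^2 + (p:ℤ)^4*z, ?_⟩
    rw [hx]
    push_cast [Nat.factorial_succ, hy]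
    linear_combination ((p:ℤ)^2 - ((j:ℤ)+1)^2)^2 * hz

lemma e2_dvd (p : ℕ) (hp : p.Prime) (hp3 : 3 < p) : p ∣ hsum (p-1) := by
  haveI : Fact p.Prime := ⟨hp⟩
  haveI : NeZero p := ⟨hp.pos.ne'⟩
  rw [← ZMod.natCast_eq_zero_iff]
  unfold hsum
  push_cast
  have hterm : ∀ i ∈ range (p-1),
      ((((p-1)! / (i+1) : ℕ)) : ZMod p)^2 = (((p-1)! : ℕ) : ZMod p)^2 * (((i+1 : ℕ)) : ZMod p)^(p-3) := by
    intro i hi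
    have hi' : i < p - 1 := mem_range.mp hi
    set c : ZMod p := (((i+1 : ℕ)) : ZMod p) with hc
    have hcne : c ≠ 0 := by
      rw [hc, Ne, ZMod.natCast_eq_zero_iff]
      intro hdvd
      have := Nat.le_of_dvd (by omega) hdvd
      omega
    have hdvd : (i+1) ∣ (p-1)! := Nat.dvd_factorial (by omega) (by omega)
    have hmul : c * (((p-1)! / (i+1) : ℕ) : ZMod p) = (((p-1)! : ℕ) : ZMod p) := by
      rw [hc, ← Nat.cast_mul, Nat.mul_div_cancel' hdvd]
    have hinv : (((p-1)! / (i+1) : ℕ) : ZMod p) = c⁻¹ * (((p-1)! : ℕ) : ZMod p) := by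
      field_simp [hcne] at hmul ⊢
      linear_combination hmul
    rw [hinv]
    have hcp : c^(p-3) * c^2 = 1 := by
      rw [← pow_add, show p-3+2 = p-1 from by omega]
      exact ZMod.pow_card_sub_one_eq_one hcne
    have hinv2 : (c⁻¹)^2 = c^(p-3) := by
      have h2 : (c^2) ≠ 0 := pow_ne_zero _ hcne
      field_simp
      linear_combination -hcp
    rw [mul_pow, hinv2]
    ring
  rw [sum_congr rfl hterm, ← mul_sum]
  have hz : ∑ i ∈ range (p-1), (((i+1:ℕ)) : ZMod p)^(p-3) = 0 := by
    have hall : ∑ i ∈ range p, (((i:ℕ)) : ZMod p)^(p-3) = 0 := by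
      have hcard : Fintype.card (ZMod p) = p := ZMod.card p
      have := FiniteField.sum_pow_lt_card_sub_one (K := ZMod p) (p-3) (by omega)
      rw [← this]
      apply Finset.sum_nbij' (fun i => ((i : ℕ) : ZMod p)) (fun x => x.val)
      · intro a ha; exact mem_univ _
      · intro a ha; exact mem_range.mpr (ZMod.val_lt a)
      · intro a ha; exact ZMod.val_cast_of_lt (mem_range.mp ha)
      · intro a ha; exact ZMod.natCast_zmod_val a
      · intro a ha; rfl
    have hsplit := Finset.sum_range_succ' (fun i => (((i:ℕ)) : ZMod p)^(p-3)) (p-1)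
    rw [show p-1+1 = p from by omega] at hsplit
    rw [hall] at hsplit
    have h0 : (((0:ℕ)) : ZMod p)^(p-3) = 0 := by
      rw [Nat.cast_zero]
      exact zero_pow (by omega)
    rw [h0, add_zero] at hsplit
    exact hsplit.symm
  rw [hz, mul_zero]

/-- counting: ∑_{j<n} ∑_{i<j} g i = ∑_{i<n} (n-1-i) * g i -/
lemma count_sum (g : ℕ → ℕ) : ∀ n : ℕ,
    ∑ j ∈ range n, ∑ i ∈ range j, g i = ∑ i ∈ range n, (n-1-i) * g i := by
  intro n
  induction n with
  | zero => simp
  | succ n ih =>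
    rw [sum_range_succ, ih, sum_range_succ]
    rw [show n+1-1-n = 0 from by omega, zero_mul, add_zero]
    rw [← sum_add_distrib]
    apply sum_congr rfl
    intro i hi
    have := mem_range.mp hi
    have : (n-1-i)*g i + g i = (n+1-1-i) * g i := by
      rcases Nat.eq_zero_or_pos n with h | h
      · omega
      · have h2 : n+1-1-i = (n-1-i)+1 := by omega
        rw [h2]; ring
    linarith [this]

def Tj (p j : ℕ) : ℕ := ((2*j).choose j)^2 * ∑ k ∈ range p, (2*k+1)^3 * ((k+j).choose (2*j))^2
def wj (p j : ℕ) : ℕ := ((p-1)! / (j !))^2 * hsum j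

lemma modp6 (p : ℕ) (hp : p.Prime) (hp3 : 3 < p) :
    (∑ k ∈ range p, (2*k+1)^3 * apery k) ≡ p^3 [MOD p^6] := by
  have hppos := hp.pos
  set f : ℕ := (p-1)! with hf
  -- basic divisibility facts
  have hdvd1 : ∀ j, j < p-1 → (j+1) ∣ f := fun j hj => Nat.dvd_factorial (by omega) (by omega)
  have hdvd2 : ∀ j, j < p → (j !) ∣ f := fun j hj => Nat.factorial_dvd_factorial (by omega)
  have hF1 : ∀ j, j < p-1 → (j+1) * (f/(j+1)) = f := fun j hj => Nat.mul_div_cancel' (hdvd1 j hj)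
  have hF2 : ∀ j, j < p → (j !) * (f/(j !)) = f := fun j hj => Nat.mul_div_cancel' (hdvd2 j hj)
  -- F3
  have hF3 : ∀ j, j < p → wj p j = ∑ i ∈ range j, (f/(i+1))^2 := by
    intro j hj
    unfold wj hsum
    rw [← hf, mul_sum]
    apply sum_congr rfl
    intro i hi
    have hi' : i < j := mem_range.mp hi
    have hd : (i+1) ∣ j ! := Nat.dvd_factorial (by omega) (by omega)
    rw [← mul_pow]
    congr 1
    rw [← Nat.mul_div_assoc _ hd, Nat.div_mul_cancel (hdvd2 j hj)]
  -- F4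
  have hF4 : ∑ j ∈ range p, wj p j + f * (∑ i ∈ range (p-1), f/(i+1))
      = p * hsum (p-1) := by
    have hW : ∑ j ∈ range p, wj p j = ∑ i ∈ range p, (p-1-i)*((f/(i+1))^2) := by
      rw [sum_congr rfl (fun j hj => hF3 j (mem_range.mp hj))]
      exact count_sum (fun i => (f/(i+1))^2) p
    rw [hW]
    have hsplit : ∑ i ∈ range p, (p-1-i)*((f/(i+1))^2)
        = ∑ i ∈ range (p-1), (p-1-i)*((f/(i+1))^2) := by
      rw [show p = (p-1)+1 from by omega, sum_range_succ]
      simp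
    rw [hsplit]
    have hE : hsum (p-1) = ∑ i ∈ range (p-1), (f/(i+1))^2 := by
      unfold hsum; rw [← hf]
    rw [hE, mul_sum, mul_sum, ← sum_add_distrib]
    apply sum_congr rfl
    intro i hi
    have hi' : i < p-1 := mem_range.mp hi
    have h1 : f*(f/(i+1)) = (i+1)*((f/(i+1))^2) := by
      set t := f/(i+1) with ht
      calc f * t = ((i+1)*t)*t := by rw [hF1 i hi']
        _ = (i+1)*t^2 := by ring
    rw [h1, ← add_mul, show p-1-i+(i+1) = p from by omega]
  -- work in K
  set K := ZMod (p^6) with hK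
  letI : CommRing K := inferInstanceAs (CommRing (ZMod (p^6)))
  have hp6 : (p:K)^6 = 0 := by
    have := ZMod.natCast_self (p^6)
    push_cast at this
    exact this
  -- G1
  have hG1 : ∀ j, j < p-1 →
      ((f^5 * Tj p j : ℕ) : K) = -((p:K)^2*(f:K)^5) + (2*(p:K)^4*(f:K)^4)*((f/(j+1) : ℕ):K)
        + (2*(p:K)^4*(f:K)^3)*((wj p j : ℕ):K) := by
    intro j hj
    obtain ⟨z, hz⟩ := xsq p j (by omega)
    have hle2 : j+1 ≤ 2*p^2 := by
      have h0 : p ≤ p^2 := Nat.le_self_pow (by norm_num) p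
      omega
    have e1 : f^5 * Tj p j = (f/(j+1)) * (f/(j !))^4 * ((2*p^2 - (j+1)) * p^2 * (xprod p j)^2) := by
      have hN : f^5 = ((j+1)*(f/(j+1))) * ((j !)*(f/(j !)))^4 := by
        rw [hF1 j hj, hF2 j (by omega)]
        ring
      calc f^5 * Tj p j
          = (((j+1)*(f/(j+1))) * ((j !)*(f/(j !)))^4) * Tj p j := by rw [← hN]
        _ = (f/(j+1)) * (f/(j !))^4 * ((j+1) * (j !)^4 * Tj p j) := by ring
        _ = (f/(j+1)) * (f/(j !))^4 * ((2*p^2 - (j+1)) * p^2 * (xprod p j)^2) := by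
            rw [Tj, main_nat p j (by omega)]
    have e1K := congrArg (Nat.cast (R := K)) e1
    push_cast [Nat.cast_sub hle2] at e1K
    have hzK := congrArg (Int.cast (R := K)) hz
    push_cast at hzK
    push_cast
    rw [e1K, hzK]
    have cK1 : ((j:K)+1)*((f/(j+1) : ℕ):K) = (f:K) := by
      have := congrArg (Nat.cast (R := K)) (hF1 j hj)
      push_cast at this
      exact this
    have cK2 : ((j ! : ℕ):K)*((f/(j !) : ℕ):K) = (f:K) := by
      have := congrArg (Nat.cast (R := K)) (hF2 j (by omega))
      push_cast at this
      exact this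
    have cK3 : ((f/(j !) : ℕ):K)^2*((hsum j : ℕ):K) = ((wj p j : ℕ):K) := by
      have : wj p j = (f/(j !))^2 * hsum j := rfl
      rw [this]
      push_cast
      ring
    set q : K := ((f/(j+1) : ℕ):K)
    set r : K := ((f/(j !) : ℕ):K)
    set J : K := ((j ! : ℕ):K)
    set Y : K := ((hsum j : ℕ):K)
    set Z : K := ((z : ℤ):K)
    set F : K := ((f:ℕ):K)
    linear_combination
      ((-(p:K)^2*((j:K)+1)*q + 2*(p:K)^4*q)*((J*r)^3+(J*r)^2*F+(J*r)*F^2+F^3)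
        + 2*(p:K)^4*((j:K)+1)*q*r^2*Y*((J*r)+F)) * cK2
      + (-(p:K)^2*F^4 + 2*(p:K)^4*r^2*Y*F^2) * cK1
      + (2*(p:K)^4*F^3) * cK3
      + (q*r^4*((2*(p:K)^2-((j:K)+1))*Z - 4*J^2*Y)) * hp6
  -- G2
  have hG2 : ((f^5 * Tj p (p-1) : ℕ) : K)
      = 2*(p:K)^3*(f:K)^5 - (p:K)^2*(f:K)^5 + 2*(p:K)^4*(f:K)^3*((hsum (p-1) : ℕ):K)
        - 4*(p:K)^5*(f:K)^3*((hsum (p-1):ℕ):K) := by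
    obtain ⟨z, hz⟩ := xsq p (p-1) (by omega)
    have hm := main_nat p (p-1) (by omega)
    rw [show p-1+1 = p from by omega, ← hf] at hm
    have h0 : p ≤ 2*p^2 := by
      have : p ≤ p^2 := Nat.le_self_pow (by norm_num) p
      omega
    have hfac : (2*p^2 - p)*p^2*(xprod p (p-1))^2 = p*((2*p-1)*p^2*(xprod p (p-1))^2) := by
      zify [h0, show 1 ≤ 2*p from by omega]
      ring
    have hcancel : f^4 * Tj p (p-1) = (2*p-1)*p^2*(xprod p (p-1))^2 := by
      apply Nat.eq_of_mul_eq_mul_left hppos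
      calc p*(f^4 * Tj p (p-1)) = p * f^4 * Tj p (p-1) := by ring
        _ = (2*p^2 - p)*p^2*(xprod p (p-1))^2 := by rw [← hm]; rfl
        _ = p*((2*p-1)*p^2*(xprod p (p-1))^2) := hfac
    have e2 : f^5 * Tj p (p-1) = f * ((2*p-1)*p^2*(xprod p (p-1))^2) := by
      calc f^5 * Tj p (p-1) = f*(f^4 * Tj p (p-1)) := by ring
        _ = f * ((2*p-1)*p^2*(xprod p (p-1))^2) := by rw [hcancel]
    have e2K := congrArg (Nat.cast (R := K)) e2
    push_cast [Nat.cast_sub (show 1 ≤ 2*p from by omega)] at e2K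
    have hzK := congrArg (Int.cast (R := K)) hz
    push_cast at hzK
    rw [← hf] at hzK
    push_cast
    rw [e2K, hzK]
    set F : K := ((f:ℕ):K)
    set Z : K := ((z : ℤ):K)
    linear_combination ((2*(p:K)-1)*F*Z) * hp6
  -- assemble
  have hSconv : ∑ k ∈ range p, (2*k+1)^3 * apery k = ∑ j ∈ range p, Tj p j := by
    unfold Tj
    exact swap_id p
  have hmain : ((f^5 * (∑ k ∈ range p, (2*k+1)^3 * apery k) : ℕ) : K)
      = ((f^5 * p^3 : ℕ) : K) := by
    have hsplitN : f^5 * (∑ k ∈ range p, (2*k+1)^3 * apery k)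
        = (∑ j ∈ range (p-1), f^5 * Tj p j) + f^5 * Tj p (p-1) := by
      rw [hSconv, mul_sum, ← sum_range_succ, show p-1+1 = p from by omega]
    have hsum1 : ∑ j ∈ range (p-1), ((f^5 * Tj p j : ℕ) : K)
        = ((p-1 : ℕ) : K) * (-((p:K)^2*(f:K)^5))
          + (2*(p:K)^4*(f:K)^4) * (∑ j ∈ range (p-1), ((f/(j+1) : ℕ):K))
          + (2*(p:K)^4*(f:K)^3) * (∑ j ∈ range (p-1), ((wj p j : ℕ):K)) := by
      rw [sum_congr rfl (fun j hj => hG1 j (mem_range.mp hj))]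
      rw [sum_add_distrib, sum_add_distrib, sum_const, nsmul_eq_mul, ← mul_sum, ← mul_sum,
        card_range]
    have hWsplit : (∑ j ∈ range (p-1), ((wj p j : ℕ):K)) + ((wj p (p-1) : ℕ):K)
        = ∑ j ∈ range p, ((wj p j : ℕ):K) := by
      rw [← sum_range_succ, show p-1+1 = p from by omega]
    have hwlast : wj p (p-1) = hsum (p-1) := by
      unfold wj
      rw [Nat.div_self (Nat.factorial_pos (p-1)), one_pow, one_mul]
    have hF4K := congrArg (Nat.cast (R := K)) hF4
    push_cast at hF4K
    obtain ⟨e, he⟩ := e2_dvd p hp hp3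
    have heK : ((hsum (p-1) : ℕ):K) = (p:K) * ((e:ℕ):K) := by
      rw [he]; push_cast [Nat.cast_mul]; ring_nf
    have hpm1 : ((p-1 : ℕ) : K) = (p:K) - 1 := by
      push_cast [Nat.cast_sub (show 1 ≤ p from by omega)]
      ring_nf
    rw [hwlast] at hWsplit
    have hR : ((f^5 * p^3 : ℕ) : K) = (f:K)^5 * (p:K)^3 := by push_cast; ring
    rw [hsplitN, Nat.cast_add, Nat.cast_sum, hsum1, hG2, hpm1, hR]
    linear_combination (2*(p:K)^4*(f:K)^3) * hWsplit
      + (2*(p:K)^4*(f:K)^3) * hF4K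
      + (-(2*(p:K)^5*(f:K)^3)) * heK
      + (-(2*(f:K)^3*((e:ℕ):K))) * hp6
  -- conclude
  have hmod : f^5 * (∑ k ∈ range p, (2*k+1)^3 * apery k) ≡ f^5 * p^3 [MOD p^6] :=
    (ZMod.natCast_eq_natCast_iff _ _ _).mp hmain
  have hnd : ¬ p ∣ f := by
    rw [hf]
    intro hd
    have := (Nat.Prime.dvd_factorial hp).mp hd
    omega
  have hco : Nat.Coprime (p^6) (f^5) :=
    Nat.Coprime.pow 6 5 ((hp.coprime_iff_not_dvd).mpr hnd)
  exact Nat.ModEq.cancel_left_of_coprime hco hmod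

lemma apery_odd (n : ℕ) : (apery n : ZMod 2) = 1 := by
  unfold apery
  push_cast
  rw [Finset.sum_range_succ']
  have h0 : (((n+0).choose (2*0) : ℕ) : ZMod 2)^2 * (((2*0).choose 0 : ℕ) : ZMod 2)^2 = 1 := by
    norm_num
  have h1 : ∀ k ∈ range n,
      (((n+(k+1)).choose (2*(k+1)) : ℕ) : ZMod 2)^2 * (((2*(k+1)).choose (k+1) : ℕ) : ZMod 2)^2 = 0 := by
    intro k _
    have heven : 2 ∣ (2*(k+1)).choose (k+1) := by
      have hp : (2*(k+1)).choose (k+1) = (2*(k+1)-1).choose k + (2*(k+1)-1).choose (k+1) := by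
        rw [show 2*(k+1) = (2*(k+1)-1)+1 from by omega]
        rw [Nat.choose_succ_succ]
        congr 1 <;> congr 1 <;> omega
      have hsym : (2*(k+1)-1).choose k = (2*(k+1)-1).choose (k+1) := by
        rw [← Nat.choose_symm (show k ≤ 2*(k+1)-1 from by omega)]
        congr 1
        omega
      omega
    obtain ⟨c, hc⟩ := heven
    rw [hc]
    push_cast
    ring_nf
    rw [show (4 : ZMod 2) = 0 from by decide]
    ring
  rw [Finset.sum_congr rfl h1]
  simp [h0]

lemma mod2 (p : ℕ) (hp : p.Prime) (hp3 : 3 < p) :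
    (∑ k ∈ range p, (2*k+1)^3 * apery k) ≡ p^3 [MOD 2] := by
  have hodd : p % 2 = 1 := Nat.odd_iff.mp (hp.odd_of_ne_two (by omega))
  rw [← ZMod.natCast_eq_natCast_iff]
  push_cast
  have h1 : ∀ k ∈ range p, (2*(k:ZMod 2)+1)^3 * (apery k : ZMod 2) = 1 := by
    intro k _
    rw [apery_odd, mul_one, show (2 : ZMod 2) = 0 from by decide]
    ring
  rw [Finset.sum_congr rfl h1, Finset.sum_const, card_range, nsmul_eq_mul, mul_one]
  have hpz : ((p:ℕ) : ZMod 2) = 1 := by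
    rw [← Nat.mod_add_div p 2]
    push_cast [hodd]
    rw [show (2 : ZMod 2) = 0 from by decide]
    ring
  rw [hpz]
  norm_num

theorem stmt5 (p : ℕ) (hp : p.Prime) (hp3 : 3 < p) :
    (∑ k ∈ Finset.range p, (2 * k + 1) ^ 3 * apery k) ≡ p ^ 3 [MOD 2 * p ^ 6] := by
  have h2 := mod2 p hp hp3
  have h6 := modp6 p hp hp3
  have hodd : p % 2 = 1 := Nat.odd_iff.mp (hp.odd_of_ne_two (by omega))
  have hnd : ¬ (2 ∣ p) := by omega
  have hco : Nat.Coprime 2 (p^6) :=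
    Nat.Coprime.pow_right _ ((Nat.prime_two.coprime_iff_not_dvd).mpr hnd)
  exact (Nat.modEq_and_modEq_iff_modEq_mul hco).mp ⟨h2, h6⟩
end

section
/- For every positive integer n, the sum over k from 0 to n-1 of C(n+k, k)^2·C(n-1, k)^2 is divisible by n. -/
open Finset

private def bb (N k : ℕ) : ℤ := (Nat.choose (N + k) k : ℤ) * (Nat.choose (N - 1) k : ℤ)

private lemma bb_zero (N : ℕ) : bb N 0 = 1 := by simp [bb]

private lemma bb_step {N k : ℕ} (h : k + 2 ≤ N) :
    ((k : ℤ) + 1) ^ 2 * bb N (k + 1) = ((N : ℤ) ^ 2 - ((k : ℤ) + 1) ^ 2) * bb N k := by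
  have h1 : ((N + k + 1 : ℕ) : ℤ) * (Nat.choose (N + k) k : ℤ)
      = (Nat.choose (N + k + 1) (k + 1) : ℤ) * ((k : ℤ) + 1) := by
    exact_mod_cast congrArg (Nat.cast : ℕ → ℤ) (Nat.add_one_mul_choose_eq (N + k) k)
  have h2 : (Nat.choose (N - 1) (k + 1) : ℤ) * ((k : ℤ) + 1)
      = (Nat.choose (N - 1) k : ℤ) * ((N - 1 - k : ℕ) : ℤ) := by
    exact_mod_cast congrArg (Nat.cast : ℕ → ℤ) (Nat.choose_succ_right_eq (N - 1) k)
  have hc1 : ((N + k + 1 : ℕ) : ℤ) = (N : ℤ) + (k : ℤ) + 1 := by push_cast; ring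
  have hc2 : ((N - 1 - k : ℕ) : ℤ) = (N : ℤ) - 1 - (k : ℤ) := by omega
  rw [hc1] at h1
  rw [hc2] at h2
  have hbb : bb N (k + 1)
      = (Nat.choose (N + k + 1) (k + 1) : ℤ) * (Nat.choose (N - 1) (k + 1) : ℤ) := rfl
  rw [hbb, bb]
  linear_combination (-((k : ℤ) + 1)) * (Nat.choose (N - 1) (k + 1) : ℤ) * h1 +
    (((N : ℤ) + (k : ℤ) + 1) * (Nat.choose (N + k) k : ℤ)) * h2

private lemma bb_chain {N a : ℕ} : ∀ t : ℕ, a + t ≤ N - 1 →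
    (∏ i ∈ range t, ((a + i : ℕ) + 1 : ℤ) ^ 2) * bb N (a + t)
      = (∏ i ∈ range t, ((N : ℤ) ^ 2 - ((a + i : ℕ) + 1 : ℤ) ^ 2)) * bb N a := by
  intro t
  induction t with
  | zero => simp
  | succ t ih =>
    intro ht
    have ht' : a + t ≤ N - 1 := by omega
    have ih' := ih ht'
    have hstep : ((a + t : ℕ) + 1 : ℤ) ^ 2 * bb N (a + t + 1)
        = ((N : ℤ) ^ 2 - ((a + t : ℕ) + 1 : ℤ) ^ 2) * bb N (a + t) :=
      bb_step (N := N) (k := a + t) (by omega)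
    rw [prod_range_succ, prod_range_succ]
    have haddt : a + (t + 1) = (a + t) + 1 := by omega
    rw [haddt]
    linear_combination ((N : ℤ) ^ 2 - ((a + t : ℕ) + 1 : ℤ) ^ 2) * ih' +
      (∏ i ∈ range t, ((a + i : ℕ) + 1 : ℤ) ^ 2) * hstep

private lemma prod_sub_dvd {s : Finset ℕ} {f g : ℕ → ℤ} {M : ℤ}
    (h : ∀ i ∈ s, M ∣ f i - g i) : M ∣ (∏ i ∈ s, f i) - ∏ i ∈ s, g i := by
  classical
  induction s using Finset.induction with
  | empty => simp
  | @insert a s ha ih =>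
    rw [prod_insert ha, prod_insert ha]
    have h1 : M ∣ f a - g a := h a (mem_insert_self a s)
    have h2 : M ∣ (∏ i ∈ s, f i) - ∏ i ∈ s, g i := ih (fun i hi => h i (mem_insert_of_mem hi))
    have : f a * (∏ i ∈ s, f i) - g a * (∏ i ∈ s, g i)
        = (f a - g a) * (∏ i ∈ s, f i) + g a * ((∏ i ∈ s, f i) - ∏ i ∈ s, g i) := by ring
    rw [this]
    exact dvd_add (h1.mul_right _) (h2.mul_left _)

private lemma sq_prods {s : Finset ℕ} {f g : ℕ → ℤ} {M : ℤ}
    (h : ∀ i ∈ s, M ∣ f i + g i) : M ∣ (∏ i ∈ s, f i) ^ 2 - (∏ i ∈ s, g i) ^ 2 := by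
  have h1 : M ∣ (∏ i ∈ s, f i) - ∏ i ∈ s, (-(g i)) := by
    apply prod_sub_dvd
    intro i hi
    have := h i hi
    simpa [sub_neg_eq_add] using this
  have h2 : (∏ i ∈ s, (-(g i))) ^ 2 = (∏ i ∈ s, g i) ^ 2 := by
    rw [← prod_pow, ← prod_pow]
    exact prod_congr rfl fun i _ => by ring
  have key : (∏ i ∈ s, f i) ^ 2 - (∏ i ∈ s, g i) ^ 2
      = ((∏ i ∈ s, f i) - ∏ i ∈ s, (-(g i))) * ((∏ i ∈ s, f i) + ∏ i ∈ s, (-(g i)))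
        + ((∏ i ∈ s, (-(g i))) ^ 2 - (∏ i ∈ s, g i) ^ 2) := by ring
  rw [key, h2, sub_self, add_zero]
  exact h1.mul_right _

private lemma sq_dvd {A B x y M : ℤ} (h : A * x = B * y) (hM : M ∣ B ^ 2 - A ^ 2) :
    M ∣ A ^ 2 * (x ^ 2 - y ^ 2) := by
  have key : A ^ 2 * (x ^ 2 - y ^ 2) = (B ^ 2 - A ^ 2) * y ^ 2 := by
    linear_combination (A * x + B * y) * h
  rw [key]
  exact hM.mul_right _

private lemma dvd_cancel {p : ℕ} (hp : p.Prime) {t : ℕ} {A X : ℤ} (hA : ¬ (p : ℤ) ∣ A)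
    (h : ((p : ℤ)) ^ t ∣ A ^ 2 * X) : ((p : ℤ)) ^ t ∣ X := by
  have hpz : Prime (p : ℤ) := Nat.prime_iff_prime_int.mp hp
  have hc : IsCoprime ((p : ℤ) ^ t) (A ^ 2) :=
    ((hpz.coprime_iff_not_dvd).mpr hA).pow
  exact hc.dvd_of_dvd_mul_left h

private lemma filter_split {p j : ℕ} (hp : 0 < p) (F : ℕ → ℤ) :
    (∏ i ∈ (range (p * (j + 1))).filter (fun i => ¬ p ∣ (i + 1)), F i)
      = (∏ i ∈ (range (p * j)).filter (fun i => ¬ p ∣ (i + 1)), F i)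
        * ∏ r ∈ range (p - 1), F (p * j + r) := by
  obtain ⟨q, rfl⟩ : ∃ q, p = q + 1 := ⟨p - 1, by omega⟩
  rw [prod_filter, prod_filter, Nat.mul_succ, prod_range_add, prod_range_succ]
  have hdvd : (q + 1) ∣ ((q + 1) * j + q + 1) := ⟨j + 1, by ring⟩
  rw [show (q + 1) * j + q + 1 = (q + 1) * j + q + 1 from rfl]
  have h1 : (if ¬ (q + 1) ∣ ((q + 1) * j + q + 1) then F ((q + 1) * j + q) else 1) = 1 := by
    rw [if_neg (not_not_intro hdvd)]
  rw [h1, mul_one]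
  congr 1
  · rw [show (q + 1) - 1 = q from rfl]
    refine prod_congr rfl fun x hx => ?_
    have hx' : x < q := mem_range.mp hx
    have hnd : ¬ (q + 1) ∣ ((q + 1) * j + x + 1) := by
      intro hd
      have h2 : (q + 1) ∣ (x + 1) := by
        have := (Nat.dvd_add_right (dvd_mul_right (q + 1) j)).mp
          (by rwa [show (q+1)*j + x + 1 = (q+1)*j + (x+1) from by omega] at hd)
        exact this
      have := Nat.le_of_dvd (by omega) h2
      omega
    rw [if_pos hnd]

private lemma collapse {p m : ℕ} (hp : p.Prime) :
    ∀ j : ℕ, j < m →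
      (∏ i ∈ (range (p * j)).filter (fun i => ¬ p ∣ (i + 1)), ((i : ℤ) + 1) ^ 2)
          * bb (p * m) (p * j)
        = (∏ i ∈ (range (p * j)).filter (fun i => ¬ p ∣ (i + 1)),
            (((p * m : ℕ) : ℤ) ^ 2 - ((i : ℤ) + 1) ^ 2)) * bb m j := by
  have hp1 : 0 < p := hp.pos
  intro j
  induction j with
  | zero => simp [bb_zero]
  | succ j ih =>
    intro hj1
    have hj : j < m := by omega
    have IH := ih hj
    set Uj := ∏ i ∈ (range (p * j)).filter (fun i => ¬ p ∣ (i + 1)), ((i : ℤ) + 1) ^ 2 with hUj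
    set Vj := ∏ i ∈ (range (p * j)).filter (fun i => ¬ p ∣ (i + 1)),
        (((p * m : ℕ) : ℤ) ^ 2 - ((i : ℤ) + 1) ^ 2) with hVj
    set u := ∏ r ∈ range (p - 1), (((p * j + r : ℕ) : ℤ) + 1) ^ 2 with hu
    set v := ∏ r ∈ range (p - 1),
        (((p * m : ℕ) : ℤ) ^ 2 - (((p * j + r : ℕ) : ℤ) + 1) ^ 2) with hv
    have hU := filter_split (p := p) (j := j) hp1 (fun i => ((i : ℤ) + 1) ^ 2)
    have hV := filter_split (p := p) (j := j) hp1
      (fun i => (((p * m : ℕ) : ℤ) ^ 2 - ((i : ℤ) + 1) ^ 2))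
    rw [hU, hV]
    have hmul : p * (j + 2) ≤ p * m := Nat.mul_le_mul_left p (by omega)
    have e1 : p * (j + 2) = p * j + p + p := by ring
    have e2 : p * (j + 1) = p * j + p := by ring
    have hchain := bb_chain (N := p * m) (a := p * j) (p - 1) (by omega)
    rw [← hu, ← hv] at hchain
    have hstep := bb_step (N := p * m) (k := p * j + (p - 1)) (by omega)
    have hidx : p * j + (p - 1) + 1 = p * (j + 1) := by omega
    rw [hidx] at hstep
    have hc1 : ((p * j + (p - 1) : ℕ) : ℤ) + 1 = (p : ℤ) * ((j : ℤ) + 1) := by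
      have : ((p * j + (p - 1) : ℕ) : ℤ) + 1 = ((p * j + (p - 1) + 1 : ℕ) : ℤ) := by push_cast; ring
      rw [this, hidx]
      push_cast
      ring
    rw [hc1] at hstep
    have hn2 : ((p * m : ℕ) : ℤ) ^ 2 - ((p : ℤ) * ((j : ℤ) + 1)) ^ 2
        = (p : ℤ) ^ 2 * ((m : ℤ) ^ 2 - ((j : ℤ) + 1) ^ 2) := by push_cast; ring
    rw [hn2] at hstep
    have hstep' : ((j : ℤ) + 1) ^ 2 * bb (p * m) (p * (j + 1))
        = ((m : ℤ) ^ 2 - ((j : ℤ) + 1) ^ 2) * bb (p * m) (p * j + (p - 1)) := by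
      have hpne : ((p : ℤ)) ^ 2 ≠ 0 := pow_ne_zero 2 (by exact_mod_cast hp1.ne')
      apply mul_left_cancel₀ hpne
      linear_combination hstep
    have hbm := bb_step (N := m) (k := j) (by omega)
    apply mul_left_cancel₀ (show (((j : ℤ) + 1) ^ 2) ≠ 0 from by positivity)
    linear_combination (Uj * u) * hstep' + (Uj * ((m : ℤ) ^ 2 - ((j : ℤ) + 1) ^ 2)) * hchain
      + (((m : ℤ) ^ 2 - ((j : ℤ) + 1) ^ 2) * v) * IH - (v * Vj) * hbm

private lemma not_dvd_prod {p : ℕ} (hp : p.Prime) {s : Finset ℕ} {y : ℕ → ℕ}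
    (h : ∀ i ∈ s, ¬ p ∣ (y i + 1)) : ¬ (p : ℤ) ∣ ∏ i ∈ s, ((y i : ℤ) + 1) ^ 2 := by
  have hpz : Prime (p : ℤ) := Nat.prime_iff_prime_int.mp hp
  intro hd
  obtain ⟨i, hi, hdi⟩ := (hpz.dvd_finset_prod_iff _).mp hd
  have h1 : (p : ℤ) ∣ ((y i : ℤ) + 1) := hpz.dvd_of_dvd_pow hdi
  have h2 : (p : ℤ) ∣ ((y i + 1 : ℕ) : ℤ) := by push_cast; exact h1
  exact h i hi (Int.natCast_dvd_natCast.mp h2)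

private lemma hMn2 {p m e : ℕ} (he : p ^ e ∣ p * m) :
    ((p : ℤ)) ^ (2 * e) ∣ ((p * m : ℕ) : ℤ) ^ 2 := by
  obtain ⟨c, hc⟩ := he
  exact ⟨(c : ℤ) ^ 2, by rw [hc]; push_cast; ring⟩

private lemma block1 {p m e : ℕ} (hp : p.Prime) (he : p ^ e ∣ p * m) {j r : ℕ}
    (hj : j < m) (hr : r < p) :
    ((p : ℤ)) ^ (2 * e) ∣ bb (p * m) (p * j + r) ^ 2 - bb (p * m) (p * j) ^ 2 := by
  have e2 : p * (j + 1) = p * j + p := by ring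
  have hmul : p * (j + 1) ≤ p * m := Nat.mul_le_mul_left p (by omega)
  have hchain := bb_chain (N := p * m) (a := p * j) r (by omega)
  have hBA : ((p : ℤ)) ^ (2 * e) ∣
      (∏ i ∈ range r, (((p * m : ℕ) : ℤ) ^ 2 - ((p * j + i : ℕ) + 1 : ℤ) ^ 2)) ^ 2
        - (∏ i ∈ range r, ((p * j + i : ℕ) + 1 : ℤ) ^ 2) ^ 2 := by
    apply sq_prods
    intro i _
    rw [sub_add_cancel]
    exact hMn2 he
  have hAx := sq_dvd hchain hBA
  apply dvd_cancel hp (A := ∏ i ∈ range r, ((p * j + i : ℕ) + 1 : ℤ) ^ 2) ?_ ?_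
  · apply not_dvd_prod hp (y := fun i => p * j + i)
    intro i hi
    have hi' : i < r := mem_range.mp hi
    intro hd
    have h2 : p ∣ (i + 1) := by
      have := (Nat.dvd_add_right (dvd_mul_right p j)).mp
        (by rwa [show p * j + i + 1 = p * j + (i + 1) from by omega] at hd)
      exact this
    have := Nat.le_of_dvd (by omega) h2
    omega
  · -- p^(2e) ∣ A^2 * (x^2 - y^2), here A is the product of squares
    have : (∏ i ∈ range r, ((p * j + i : ℕ) + 1 : ℤ) ^ 2) ^ 2
        * (bb (p * m) (p * j + r) ^ 2 - bb (p * m) (p * j) ^ 2)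
        = (∏ i ∈ range r, ((p * j + i : ℕ) + 1 : ℤ) ^ 2) ^ 2
        * (bb (p * m) (p * j + r) ^ 2 - bb (p * m) (p * j) ^ 2) := rfl
    exact hAx

private lemma block2 {p m e : ℕ} (hp : p.Prime) (he : p ^ e ∣ p * m) {j : ℕ}
    (hj : j < m) :
    ((p : ℤ)) ^ (2 * e) ∣ bb (p * m) (p * j) ^ 2 - bb m j ^ 2 := by
  have hcol := collapse hp j hj
  have hBA : ((p : ℤ)) ^ (2 * e) ∣
      (∏ i ∈ (range (p * j)).filter (fun i => ¬ p ∣ (i + 1)),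
          (((p * m : ℕ) : ℤ) ^ 2 - ((i : ℤ) + 1) ^ 2)) ^ 2
        - (∏ i ∈ (range (p * j)).filter (fun i => ¬ p ∣ (i + 1)), ((i : ℤ) + 1) ^ 2) ^ 2 := by
    apply sq_prods
    intro i _
    rw [sub_add_cancel]
    exact hMn2 he
  have hAx := sq_dvd hcol hBA
  apply dvd_cancel hp
    (A := ∏ i ∈ (range (p * j)).filter (fun i => ¬ p ∣ (i + 1)), ((i : ℤ) + 1) ^ 2) ?_ hAx
  apply not_dvd_prod hp (y := fun i => i)
  intro i hi
  exact (mem_filter.mp hi).2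

private lemma sum_grid (p : ℕ) (f : ℕ → ℤ) :
    ∀ m, ∑ k ∈ range (p * m), f k = ∑ j ∈ range m, ∑ r ∈ range p, f (p * j + r)
  | 0 => by simp
  | (m + 1) => by
      rw [Nat.mul_succ, sum_range_add, sum_grid p f m, sum_range_succ]

private lemma key {p m e : ℕ} (hp : p.Prime) (he : p ^ e ∣ p * m) :
    ((p : ℤ)) ^ e ∣ (∑ k ∈ range (p * m), bb (p * m) k ^ 2)
      - p * ∑ j ∈ range m, bb m j ^ 2 := by
  rw [sum_grid p (fun k => bb (p * m) k ^ 2) m]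
  rw [Finset.mul_sum]
  rw [← Finset.sum_sub_distrib]
  apply Finset.dvd_sum
  intro j hj
  have hj' : j < m := mem_range.mp hj
  have hconst : (p : ℤ) * bb m j ^ 2 = ∑ _r ∈ range p, bb m j ^ 2 := by
    rw [sum_const, card_range, nsmul_eq_mul]
  rw [hconst, ← Finset.sum_sub_distrib]
  apply Finset.dvd_sum
  intro r hr
  have hr' : r < p := mem_range.mp hr
  have h1 := block1 hp he hj' hr'
  have h2 := block2 hp he (j := j) hj'
  have h3 := dvd_add h1 h2
  rw [sub_add_sub_cancel] at h3
  exact dvd_trans (pow_dvd_pow _ (by omega : e ≤ 2 * e)) h3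

private def Sn (n : ℕ) : ℕ :=
  ∑ k ∈ range n, (Nat.choose (n + k) k) ^ 2 * (Nat.choose (n - 1) k) ^ 2

private lemma Sn_cast (n : ℕ) : ((Sn n : ℕ) : ℤ) = ∑ k ∈ range n, bb n k ^ 2 := by
  rw [Sn]
  push_cast
  exact sum_congr rfl fun k _ => by rw [bb]; ring

private lemma main : ∀ n : ℕ, 0 < n → n ∣ Sn n := by
  intro n
  induction n using Nat.strong_induction_on with
  | _ n IH =>
    intro hn
    rw [Nat.dvd_iff_prime_pow_dvd_dvd (Sn n) n]
    intro q k hq hkn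
    rcases Nat.eq_zero_or_pos k with rfl | hk
    · simp
    have hqp : Nat.Prime q := hq
    have hqn : q ∣ n := dvd_trans (dvd_pow_self q (by omega)) hkn
    obtain ⟨m, rfl⟩ := hqn
    rcases Nat.eq_zero_or_pos m with rfl | hm
    · simp at hn
    have hmlt : m < q * m := by
      have := (Nat.mul_lt_mul_right hm).mpr hqp.one_lt
      simpa using this
    have IHm := IH m hmlt hm
    have hqk : q ^ k = q * q ^ (k - 1) := by
      rw [← pow_succ']
      congr 1
      omega
    have hk1 : q ^ (k - 1) ∣ m := by
      have h0 : q * q ^ (k - 1) ∣ q * m := by rw [← hqk]; exact hkn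
      exact (Nat.mul_dvd_mul_iff_left hqp.pos).mp h0
    have hz := key (e := k) hqp hkn
    have h2 : ((q : ℤ)) ^ k ∣ (q : ℤ) * ((Sn m : ℕ) : ℤ) := by
      obtain ⟨c, hc⟩ := dvd_trans hk1 IHm
      refine ⟨(c : ℤ), ?_⟩
      have hqkz : ((q : ℤ)) ^ k = (q : ℤ) * (q : ℤ) ^ (k - 1) := by
        exact_mod_cast congrArg (Nat.cast : ℕ → ℤ) hqk
      rw [hc, hqkz]
      push_cast
      ring
    rw [← Sn_cast, ← Sn_cast] at hz
    have h3 : ((q : ℤ)) ^ k ∣ ((Sn (q * m) : ℕ) : ℤ) := by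
      have h4 := dvd_add hz h2
      rwa [sub_add_cancel] at h4
    have h5 : ((q ^ k : ℕ) : ℤ) ∣ ((Sn (q * m) : ℕ) : ℤ) := by push_cast; exact h3
    exact Int.natCast_dvd_natCast.mp h5

theorem stmt6 (n : ℕ) (hn : 0 < n) :
    n ∣ ∑ k ∈ Finset.range n, (Nat.choose (n + k) k) ^ 2 * (Nat.choose (n - 1) k) ^ 2 :=
  main n hn
end

section
/- Let a_1,...,a_m, b_1,...,b_m be nonnegative integers and n a positive integer. Then the sum over k from 0 to n-1 of C(n-1, k)^2 · ∏_{i=1}^m C(a_i+k, b_i+k) is divisible by gcd(a_1,...,a_m, b_1,...,b_m, n). -/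
open Finset fwdDiff

/-- Telescoping: if `d ∣ e * (x i - y i)` for all `i`, then `d ∣ e * (∏ x - ∏ y)`. -/
lemma aux_dvd_mul_prod_sub {ι : Type*} [DecidableEq ι] (s : Finset ι) (x y : ι → ℤ) (d e : ℤ)
    (h : ∀ i ∈ s, d ∣ e * (x i - y i)) :
    d ∣ e * (∏ i ∈ s, x i - ∏ i ∈ s, y i) := by
  induction s using Finset.induction_on with
  | empty => simp
  | @insert a s ha ih =>
    rw [prod_insert ha, prod_insert ha]
    have h1 : d ∣ e * (x a - y a) := h a (mem_insert_self _ _)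
    have h2 := ih (fun i hi' => h i (mem_insert_of_mem hi'))
    have key : e * (x a * ∏ i ∈ s, x i - y a * ∏ i ∈ s, y i)
        = x a * (e * (∏ i ∈ s, x i - ∏ i ∈ s, y i))
          + (∏ i ∈ s, y i) * (e * (x a - y a)) := by ring
    rw [key]
    exact dvd_add (h2.mul_left _) (h1.mul_left _)

/-- `∑_k C(N,k)^2 C(k,u) = C(N,u) * C(2N-u, N-u)`. -/
lemma aux_sum_choose_sq (N u : ℕ) (hu : u ≤ N) :
    ∑ k ∈ range (N + 1), (N.choose k) ^ 2 * k.choose u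
      = N.choose u * (2 * N - u).choose (N - u) := by
  have hV : (2 * N - u).choose (N - u)
      = ∑ j ∈ range (N - u + 1), (N - u).choose j * N.choose (N - u - j) := by
    have h2 : 2 * N - u = (N - u) + N := by omega
    rw [h2, Nat.add_choose_eq, Finset.Nat.sum_antidiagonal_eq_sum_range_succ_mk]
  -- LHS: terms with k < u vanish
  have hsplit : ∑ k ∈ range (N + 1), (N.choose k) ^ 2 * k.choose u
      = ∑ k ∈ Finset.Ico u (N + 1), (N.choose k) ^ 2 * k.choose u := by
    rw [range_eq_Ico, ← Finset.sum_Ico_consecutive _ (Nat.zero_le u) (by omega : u ≤ N + 1)]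
    have : ∑ k ∈ Finset.Ico 0 u, (N.choose k) ^ 2 * k.choose u = 0 := by
      apply Finset.sum_eq_zero
      intro k hk
      rw [Finset.mem_Ico] at hk
      rw [Nat.choose_eq_zero_of_lt hk.2, mul_zero]
    rw [this, zero_add]
  rw [hsplit, Finset.sum_Ico_eq_sum_range, hV, Finset.mul_sum]
  have hlen : N + 1 - u = N - u + 1 := by omega
  rw [hlen]
  apply Finset.sum_congr rfl
  intro j hj
  rw [Finset.mem_range] at hj
  have hj' : j ≤ N - u := by omega
  have hk : u + j ≤ N := by omega
  have h1 : N.choose (u + j) * (u + j).choose u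
      = N.choose u * (N - u).choose j := by
    have := Nat.choose_mul (n := N) (k := u + j) (s := u) (Nat.le_add_right u j)
    simpa using this
  have h2 : N.choose (u + j) = N.choose (N - u - j) := by
    have : N - (u + j) = N - u - j := by omega
    rw [← this, Nat.choose_symm hk]
  calc (N.choose (u + j)) ^ 2 * (u + j).choose u
      = (N.choose (u + j) * (u + j).choose u) * N.choose (u + j) := by ring
    _ = (N.choose u * (N - u).choose j) * N.choose (N - u - j) := by rw [h1, h2]
    _ = N.choose u * ((N - u).choose j * N.choose (N - u - j)) := by ring

/-- `gcd(N+1, u) ∣ C(2N-u, N-u)` for `u ≤ N`. -/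
lemma aux_gcd_dvd_choose (N u : ℕ) (hu : u ≤ N) :
    Nat.gcd (N + 1) u ∣ (2 * N - u).choose (N - u) := by
  set g := Nat.gcd (N + 1) u with hg
  have hgn : g ∣ N + 1 := Nat.gcd_dvd_left _ _
  have hgu : g ∣ u := Nat.gcd_dvd_right _ _
  -- (2N-u).choose (N-u) = (2N-u).choose N
  have hsymm : (2 * N - u).choose (N - u) = (2 * N - u).choose N := by
    have h1 : N ≤ 2 * N - u := by omega
    have h2 : 2 * N - u - N = N - u := by omega
    rw [← h2, Nat.choose_symm h1]
  -- (2N-u+1) * (2N-u).choose N = (2N-u+1).choose (N+1) * (N+1)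
  have hid := Nat.add_one_mul_choose_eq (2 * N - u) N
  have hdvd : g ∣ (2 * N - u + 1) * (2 * N - u).choose N := by
    rw [hid]
    exact Dvd.dvd.mul_left hgn _
  have hcop : Nat.Coprime g (2 * N - u + 1) := by
    have h1 : Nat.gcd g (2 * N - u + 1) ∣ 1 := by
      have e1 : Nat.gcd g (2 * N - u + 1) ∣ 2 * N - u + 1 := Nat.gcd_dvd_right _ _
      have e2 : Nat.gcd g (2 * N - u + 1) ∣ u := (Nat.gcd_dvd_left _ _).trans hgu
      have e3 : Nat.gcd g (2 * N - u + 1) ∣ 2 * (N + 1) :=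
        ((Nat.gcd_dvd_left _ _).trans hgn).mul_left 2
      have e4 : Nat.gcd g (2 * N - u + 1) ∣ (2 * N - u + 1) + u := Nat.dvd_add e1 e2
      have e5 := Nat.dvd_sub e3 e4
      have h5 : 2 * (N + 1) - ((2 * N - u + 1) + u) = 1 := by omega
      rw [h5] at e5
      exact e5
    exact Nat.eq_one_of_dvd_one h1
  rw [hsymm]
  exact (Nat.Coprime.dvd_of_dvd_mul_left hcop hdvd)

theorem stmt7 (m : ℕ) (a b : Fin m → ℕ) (n : ℕ) (hn : 0 < n) :
    Nat.gcd (Finset.univ.gcd a) (Nat.gcd (Finset.univ.gcd b) n) ∣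
      ∑ k ∈ Finset.range n,
        (Nat.choose (n - 1) k) ^ 2 * ∏ i, Nat.choose (a i + k) (b i + k) := by
  obtain ⟨N, rfl⟩ : ∃ N, n = N + 1 := ⟨n - 1, by omega⟩
  simp only [Nat.add_sub_cancel]
  set d := Nat.gcd (Finset.univ.gcd a) (Nat.gcd (Finset.univ.gcd b) (N + 1)) with hd
  have hdn : d ∣ N + 1 := (Nat.gcd_dvd_right _ _).trans (Nat.gcd_dvd_right _ _)
  have hda : ∀ i, d ∣ a i := fun i =>
    (Nat.gcd_dvd_left _ _).trans (Finset.gcd_dvd (mem_univ i))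
  have hdb : ∀ i, d ∣ b i := fun i =>
    ((Nat.gcd_dvd_right _ _).trans (Nat.gcd_dvd_left _ _)).trans (Finset.gcd_dvd (mem_univ i))
  have hd0 : 0 < d := Nat.pos_of_dvd_of_pos hdn (Nat.succ_pos N)
  -- move to ℤ
  rw [← Int.natCast_dvd_natCast]
  set F : ℕ → ℤ := fun k => ∏ i, ((a i + k).choose (b i + k) : ℤ) with hF
  have hcast : ((∑ k ∈ Finset.range (N + 1),
        (Nat.choose N k) ^ 2 * ∏ i, Nat.choose (a i + k) (b i + k) : ℕ) : ℤ)
      = ∑ k ∈ range (N + 1), ((N.choose k : ℤ)) ^ 2 * F k := by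
    push_cast [hF]
    rfl
  rw [hcast]
  -- Step A: per-step divisibility  d ∣ (t+1)(F(t+1) - F t)
  have hstep : ∀ t : ℕ, (d : ℤ) ∣ ((t : ℤ) + 1) * (F (t + 1) - F t) := by
    intro t
    apply aux_dvd_mul_prod_sub
    intro i _
    set C : ℤ := ((a i + t).choose (b i + t) : ℤ) with hC
    set C' : ℤ := ((a i + (t + 1)).choose (b i + (t + 1)) : ℤ) with hC'
    have hkey : ((a i : ℤ) + t + 1) * C = C' * ((b i : ℤ) + t + 1) := by
      have := Nat.add_one_mul_choose_eq (a i + t) (b i + t)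
      have h2 : (((a i + t + 1) * (a i + t).choose (b i + t) : ℕ) : ℤ)
          = (((a i + t + 1).choose (b i + t + 1) * (b i + t + 1) : ℕ) : ℤ) := by
        exact_mod_cast congrArg (Nat.cast : ℕ → ℤ) this
      push_cast at h2
      have e1 : a i + (t + 1) = a i + t + 1 := by omega
      have e2 : b i + (t + 1) = b i + t + 1 := by omega
      rw [hC, hC', e1, e2]
      push_cast
      linarith [h2]
    have hiden : ((t : ℤ) + 1) * (C' - C) = (a i : ℤ) * C - (b i : ℤ) * C' := by
      linear_combination -hkey
    rw [hiden]
    exact dvd_sub ((Int.natCast_dvd_natCast.mpr (hda i)).mul_right C)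
      ((Int.natCast_dvd_natCast.mpr (hdb i)).mul_right C')
  -- Step B: d ∣ u * Δ^[u] F 0
  have hA : ∀ u : ℕ, (d : ℤ) ∣ (u : ℤ) * ((fwdDiff 1)^[u] F 0) := by
    intro u
    rcases u with _ | v
    · simp
    · rw [Function.iterate_succ_apply]
      rw [fwdDiff_iter_eq_sum_shift]
      rw [Finset.mul_sum]
      apply Finset.dvd_sum
      intro t ht
      have hDF : (fwdDiff 1 F) (0 + t • 1) = F (t + 1) - F t := by
        simp [fwdDiff]
      have hY : (d : ℤ) ∣ ((-1 : ℤ) ^ (v - t) * (((v + 1).choose (t + 1) : ℕ) : ℤ))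
          * (((t : ℤ) + 1) * (F (t + 1) - F t)) := (hstep t).mul_left _
      convert hY using 1
      · rfl
      rw [hDF, smul_eq_mul]
      have h2 : ((v : ℤ) + 1) * ((v.choose t : ℕ) : ℤ)
          = (((v + 1).choose (t + 1) : ℕ) : ℤ) * ((t : ℤ) + 1) := by
        exact_mod_cast Nat.add_one_mul_choose_eq v t
      push_cast
      linear_combination ((-1 : ℤ) ^ (v - t) * (F (t + 1) - F t)) * h2
  -- Step C: Newton expansion of the sum
  have hNewton : ∀ k : ℕ, F k = ∑ u ∈ range (k + 1), (k.choose u : ℤ) * ((fwdDiff 1)^[u] F 0) := by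
    intro k
    have h0 := shift_eq_sum_fwdDiff_iter (1 : ℕ) F k 0
    simp only [smul_eq_mul, mul_one, zero_add, nsmul_eq_mul] at h0
    exact h0
  have hmain : ∑ k ∈ range (N + 1), ((N.choose k : ℤ)) ^ 2 * F k
      = ∑ u ∈ range (N + 1),
          ((fwdDiff 1)^[u] F 0) * ((N.choose u : ℤ) * ((2 * N - u).choose (N - u) : ℤ)) := by
    have h1 : ∀ k ∈ range (N + 1),
        ((N.choose k : ℤ)) ^ 2 * F k
          = ∑ u ∈ range (N + 1),
              ((N.choose k : ℤ)) ^ 2 * ((k.choose u : ℤ) * ((fwdDiff 1)^[u] F 0)) := by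
      intro k hk
      rw [Finset.mem_range] at hk
      rw [hNewton k, Finset.mul_sum]
      apply Finset.sum_subset
      · exact Finset.range_subset_range.mpr (by omega)
      · intro u _ hu
        rw [Finset.mem_range] at hu
        push_neg at hu
        have hz : k.choose u = 0 := Nat.choose_eq_zero_of_lt (by omega)
        rw [hz]
        ring
    rw [Finset.sum_congr rfl h1, Finset.sum_comm]
    apply Finset.sum_congr rfl
    intro u hu
    rw [Finset.mem_range] at hu
    have hW := aux_sum_choose_sq N u (by omega)
    have hWZ : ∑ k ∈ range (N + 1), ((N.choose k : ℤ)) ^ 2 * (k.choose u : ℤ)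
        = (N.choose u : ℤ) * ((2 * N - u).choose (N - u) : ℤ) := by exact_mod_cast hW
    calc ∑ k ∈ range (N + 1), ((N.choose k : ℤ)) ^ 2 * ((k.choose u : ℤ) * ((fwdDiff 1)^[u] F 0))
        = (∑ k ∈ range (N + 1), ((N.choose k : ℤ)) ^ 2 * (k.choose u : ℤ)) * ((fwdDiff 1)^[u] F 0) := by
          rw [Finset.sum_mul]; apply Finset.sum_congr rfl; intro k _; ring
      _ = ((fwdDiff 1)^[u] F 0) * ((N.choose u : ℤ) * ((2 * N - u).choose (N - u) : ℤ)) := by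
          rw [hWZ]; ring
  rw [hmain]
  -- Step D: per-u divisibility
  apply Finset.dvd_sum
  intro u hu
  rw [Finset.mem_range] at hu
  set g := Nat.gcd d u with hg
  have hg0 : 0 < g := Nat.gcd_pos_of_pos_left u hd0
  have hgd : g ∣ d := Nat.gcd_dvd_left _ _
  have hgu : g ∣ u := Nat.gcd_dvd_right _ _
  have hgT : g ∣ (2 * N - u).choose (N - u) := by
    have h1 : g ∣ Nat.gcd (N + 1) u := Nat.dvd_gcd (hgd.trans hdn) hgu
    exact h1.trans (aux_gcd_dvd_choose N u (by omega))
  have hd' : (↑(d / g) : ℤ) ∣ ((fwdDiff 1)^[u] F 0) := by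
    have hco : Nat.Coprime (d / g) (u / g) := Nat.coprime_div_gcd_div_gcd hg0
    have hdu : (d : ℤ) ∣ (u : ℤ) * ((fwdDiff 1)^[u] F 0) := hA u
    have hde : d = g * (d / g) := (Nat.mul_div_cancel' hgd).symm
    have hue : u = g * (u / g) := (Nat.mul_div_cancel' hgu).symm
    have h2 : ((g : ℤ) * (↑(d / g))) ∣ (g : ℤ) * ((↑(u / g)) * ((fwdDiff 1)^[u] F 0)) := by
      have hueZ : (u : ℤ) = (g : ℤ) * (↑(u / g) : ℤ) := by exact_mod_cast hue
      have : (u : ℤ) * ((fwdDiff 1)^[u] F 0) = (g : ℤ) * ((↑(u / g)) * ((fwdDiff 1)^[u] F 0)) := by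
        rw [hueZ]; ring
      rw [← this, ← Nat.cast_mul, ← hde]
      exact hdu
    have h3 : (↑(d / g) : ℤ) ∣ (↑(u / g)) * ((fwdDiff 1)^[u] F 0) :=
      (mul_dvd_mul_iff_left (by exact_mod_cast hg0.ne' : (g : ℤ) ≠ 0)).mp h2
    have h4 : IsCoprime (↑(d / g) : ℤ) (↑(u / g) : ℤ) := by
      rw [Int.isCoprime_iff_gcd_eq_one, Int.gcd_natCast_natCast]
      exact hco
    exact h4.dvd_of_dvd_mul_left h3
  have hde : d = (d / g) * g := (Nat.div_mul_cancel hgd).symm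
  have : (d : ℤ) = (↑(d / g) : ℤ) * (g : ℤ) := by exact_mod_cast hde
  rw [this]
  have := mul_dvd_mul hd' (Int.natCast_dvd_natCast.mpr hgT)
  calc (↑(d / g) : ℤ) * (g : ℤ)
      ∣ ((fwdDiff 1)^[u] F 0) * ((2 * N - u).choose (N - u) : ℤ) := this
    _ ∣ ((fwdDiff 1)^[u] F 0) * ((N.choose u : ℤ) * ((2 * N - u).choose (N - u) : ℤ)) :=
        ⟨(N.choose u : ℤ), by ring⟩
end

section
/- For all nonnegative integers k, m, r, there exist integers a_0, a_1, ..., a_r (depending on k and r but not on m) such that m^r·(m+1)^r·C(m+k, 2k) = ∑_{j=0}^{r} a_j · C(m+k+j, 2k+2j) · (2k+1)_{2j}, where (x)_n = x(x+1)···(x+n-1) is the rising factorial. -/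
/-- Core cast identity. -/
lemma core8 (n s : ℕ) :
    ((n + 1).choose (s + 2) : ℤ) * (s + 1) * (s + 2) =
      (n.choose s : ℤ) * (n + 1) * ((n : ℤ) - s) := by
  by_cases h : s ≤ n
  · have h1 : (n + 1).choose (s + 2) * (s + 2) = (n + 1) * n.choose (s + 1) := by
      have h := Nat.add_one_mul_choose_eq n (s + 1)
      rw [show s + 1 + 1 = s + 2 from rfl] at h
      linarith
    have h2 : n.choose (s + 1) * (s + 1) = n.choose s * (n - s) :=
      Nat.choose_succ_right_eq n s
    have hnat : (n + 1).choose (s + 2) * (s + 1) * (s + 2) =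
        n.choose s * (n + 1) * (n - s) := by
      calc (n + 1).choose (s + 2) * (s + 1) * (s + 2)
          = ((n + 1).choose (s + 2) * (s + 2)) * (s + 1) := by ring
        _ = (n + 1) * (n.choose (s + 1) * (s + 1)) := by rw [h1]; ring
        _ = (n + 1) * (n.choose s * (n - s)) := by rw [h2]
        _ = n.choose s * (n + 1) * (n - s) := by ring
    have := congrArg (fun t : ℕ => (t : ℤ)) hnat
    push_cast [Nat.cast_sub h] at this
    linarith
  · have h1 : (n + 1).choose (s + 2) = 0 := Nat.choose_eq_zero_of_lt (by omega)
    have h2 : n.choose s = 0 := Nat.choose_eq_zero_of_lt (by omega)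
    simp [h1, h2]

/-- Product formula. -/
lemma prodB (k m j : ℕ) :
    ((m + k + j).choose (2 * k + 2 * j) : ℤ) * (2 * k + 1).ascFactorial (2 * j) =
      ((m + k).choose (2 * k) : ℤ) *
        ∏ i ∈ Finset.range j, ((m : ℤ) * (m + 1) - ((k : ℤ) + i + 1) * ((k : ℤ) + i)) := by
  induction j with
  | zero => simp
  | succ j ih =>
    have hA : m + k + (j + 1) = (m + k + j) + 1 := by omega
    have hB : 2 * k + 2 * (j + 1) = (2 * k + 2 * j) + 2 := by omega
    have hC : 2 * (j + 1) = (2 * j) + 1 + 1 := by omega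
    rw [hA, hB, hC, Nat.ascFactorial_succ, Nat.ascFactorial_succ, Finset.prod_range_succ]
    have key := core8 (m + k + j) (2 * k + 2 * j)
    push_cast at key ⊢
    have expand : ((m : ℤ) + k + j + 1) * ((m : ℤ) + k + j - (2 * k + 2 * j)) =
        (m : ℤ) * (m + 1) - ((k : ℤ) + j + 1) * ((k : ℤ) + j) := by ring
    linear_combination (((2 * k + 1).ascFactorial (2 * j) : ℤ)) * key + (((m : ℤ) + k + j + 1) * ((m : ℤ) + k + j - (2 * k + 2 * j))) * ih

/-- Newton-type basis expansion with zero tail. -/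
lemma basisA (c : ℕ → ℤ) (r : ℕ) :
    ∃ a : ℕ → ℤ, (∀ j, r < j → a j = 0) ∧
      ∀ x : ℤ, x ^ r = ∑ j ∈ Finset.range (r + 1),
        a j * ∏ i ∈ Finset.range j, (x - c i) := by
  induction r with
  | zero =>
    exact ⟨fun j => if j = 0 then 1 else 0, fun j hj => by simp [show j ≠ 0 by omega],
      fun x => by simp⟩
  | succ r ih =>
    obtain ⟨a, ha0, ha⟩ := ih
    refine ⟨fun j => (if j = 0 then 0 else a (j - 1)) + c j * a j, ?_, ?_⟩
    · intro j hj
      have h1 : a j = 0 := ha0 j (by omega)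
      have h2 : j ≠ 0 := by omega
      have h3 : a (j - 1) = 0 := ha0 (j - 1) (by omega)
      simp [h2, h1, h3]
    · intro x
      set P : ℕ → ℤ := fun j => ∏ i ∈ Finset.range j, (x - c i) with hP
      have hPsucc : ∀ j, P (j + 1) = P j * (x - c j) := fun j => Finset.prod_range_succ _ _
      have hx : x ^ (r + 1) = ∑ j ∈ Finset.range (r + 1), a j * (x * P j) := by
        rw [pow_succ, ha x, Finset.sum_mul]
        exact Finset.sum_congr rfl fun j _ => by ring
      rw [hx]
      have step : ∀ j, a j * (x * P j) = a j * P (j + 1) + c j * a j * P j := by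
        intro j; rw [hPsucc]; ring
      rw [Finset.sum_congr rfl fun j _ => step j, Finset.sum_add_distrib]
      have hshift : ∑ j ∈ Finset.range (r + 1), a j * P (j + 1) =
          ∑ j ∈ Finset.range (r + 2), (if j = 0 then 0 else a (j - 1)) * P j := by
        conv_rhs => rw [Finset.sum_range_succ' (fun j => (if j = 0 then 0 else a (j - 1)) * P j) (r + 1)]
        simp
      have htail : ∑ j ∈ Finset.range (r + 1), c j * a j * P j =
          ∑ j ∈ Finset.range (r + 2), c j * a j * P j := by
        conv_rhs => rw [Finset.sum_range_succ]
        simp [ha0 (r + 1) (by omega)]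
      rw [hshift, htail, ← Finset.sum_add_distrib]
      exact Finset.sum_congr rfl fun j _ => by ring

theorem stmt8 (k r : ℕ) :
    ∃ a : ℕ → ℤ, ∀ m : ℕ,
      (m : ℤ) ^ r * ((m : ℤ) + 1) ^ r * Nat.choose (m + k) (2 * k) =
        ∑ j ∈ Finset.range (r + 1),
          a j * Nat.choose (m + k + j) (2 * k + 2 * j) *
            ((2 * k + 1).ascFactorial (2 * j)) := by
  obtain ⟨a, -, ha⟩ := basisA (fun i => ((k : ℤ) + i + 1) * ((k : ℤ) + i)) r
  refine ⟨a, fun m => ?_⟩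
  have hx := ha ((m : ℤ) * (m + 1))
  calc (m : ℤ) ^ r * ((m : ℤ) + 1) ^ r * Nat.choose (m + k) (2 * k)
      = ((m : ℤ) * (m + 1)) ^ r * Nat.choose (m + k) (2 * k) := by rw [mul_pow]
    _ = (∑ j ∈ Finset.range (r + 1),
          a j * ∏ i ∈ Finset.range j, ((m : ℤ) * (m + 1) - ((k : ℤ) + i + 1) * ((k : ℤ) + i))) *
          Nat.choose (m + k) (2 * k) := by rw [← hx]
    _ = ∑ j ∈ Finset.range (r + 1),
          a j * Nat.choose (m + k + j) (2 * k + 2 * j) * ((2 * k + 1).ascFactorial (2 * j)) := by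
        rw [Finset.sum_mul]
        refine Finset.sum_congr rfl fun j _ => ?_
        have := prodB k m j
        push_cast at this ⊢
        linear_combination -(a j) * this
end

section
/- For all nonnegative integers a, k, n with k ≤ n, the identity ∑_{m=k}^{n-1} (2m+1)·C(m+k, 2k)·C(m+k+a, 2k+2a) = (n-k)(n-k-a)/(2k+a+1) · C(n+k, 2k)·C(n+k+a, 2k+2a) holds. -/
lemma aux_choose (N r : ℕ) :
    ((N : ℤ) + 1) * Nat.choose N r = ((N : ℤ) + 1 - r) * Nat.choose (N + 1) r := by
  rcases le_or_gt r (N + 1) with h | h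
  · have h1 := Nat.choose_mul_succ_eq N r
    zify [h] at h1
    linarith
  · rw [Nat.choose_eq_zero_of_lt (by omega), Nat.choose_eq_zero_of_lt h]
    simp

theorem stmt9 (a k n : ℕ) (hkn : k ≤ n) :
    (2 * (k : ℤ) + a + 1) *
        ∑ m ∈ Finset.Ico k n,
          (2 * (m : ℤ) + 1) * Nat.choose (m + k) (2 * k) *
            Nat.choose (m + k + a) (2 * k + 2 * a) =
      ((n : ℤ) - k) * ((n : ℤ) - k - a) * Nat.choose (n + k) (2 * k) *
        Nat.choose (n + k + a) (2 * k + 2 * a) := by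
  induction n, hkn using Nat.le_induction with
  | base => simp
  | succ n hn ih =>
    rw [Finset.sum_Ico_succ_top hn, mul_add, ih]
    have h1 := aux_choose (n + k) (2 * k)
    have h2 := aux_choose (n + k + a) (2 * k + 2 * a)
    have e1 : n + k + 1 = n + 1 + k := by omega
    have e2 : n + k + a + 1 = n + 1 + k + a := by omega
    rw [e1] at h1
    rw [e2] at h2
    push_cast at h1 h2 ⊢
    linear_combination ((n : ℤ) + k + a + 1) * (Nat.choose (n + k + a) (2 * k + 2 * a) : ℤ) * h1
      + ((n : ℤ) + 1 - k) * (Nat.choose (n + 1 + k) (2 * k) : ℤ) * h2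
end

section
/- For all nonnegative integers a, k and positive integers n, the quantity (n-k)(n-k-a)/(n(2k+a+1)) · C(n+k, 2k)·C(n+k+a, 2k+2a)·C(2k, k)·(2k+1)_{2a} is a nonnegative integer. -/
lemma asc_add' (x s t : ℕ) :
    x.ascFactorial (s + t) = x.ascFactorial s * (x + s).ascFactorial t := by
  induction t with
  | zero => simp [Nat.ascFactorial_zero]
  | succ t ih =>
      rw [show s + (t + 1) = (s + t) + 1 by omega, Nat.ascFactorial_succ, ih,
        Nat.ascFactorial_succ, show x + (s + t) = x + s + t by omega]
      ring

lemma asc_one' (x : ℕ) : x.ascFactorial 1 = x := by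
  simp [Nat.ascFactorial_succ, Nat.ascFactorial_zero]

theorem stmt10 (a k n : ℕ) (hn : 0 < n) :
    ∃ N : ℕ, ((n : ℤ) - k) * ((n : ℤ) - k - a) * Nat.choose (n + k) (2 * k) *
        Nat.choose (n + k + a) (2 * k + 2 * a) * Nat.choose (2 * k) k *
        ((2 * k + 1).ascFactorial (2 * a)) =
      (N : ℤ) * (n * (2 * (k : ℤ) + a + 1)) := by
  rcases lt_or_ge n k with h | hk
  · refine ⟨0, ?_⟩
    have h0 : Nat.choose (n + k) (2 * k) = 0 := Nat.choose_eq_zero_of_lt (by omega)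
    simp [h0]
  rcases lt_or_ge n (k + a) with h2 | hka
  · refine ⟨0, ?_⟩
    have h0 : Nat.choose (n + k + a) (2 * k + 2 * a) = 0 := Nat.choose_eq_zero_of_lt (by omega)
    simp [h0]
  · refine ⟨Nat.choose (n - 1) k * Nat.choose (n + k) k *
      Nat.choose (n + k + a) (2 * k + 2 * a + 1) * (2 * k + 1).ascFactorial a *
      (2 * k + a + 2).ascFactorial a, ?_⟩
    -- Lemma A
    have h1 : (n + k).choose (2 * k) * (2 * k).choose k = (n + k).choose k * n.choose k := by
      have := Nat.choose_mul (n := n + k) (show k ≤ 2 * k by omega)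
      simpa [show n + k - k = n by omega, show 2 * k - k = k by omega] using this
    have h2' : n.choose (k + 1) * (k + 1) = n.choose k * (n - k) :=
      Nat.choose_succ_right_eq n k
    have h3 : n * (n - 1).choose k = n.choose (k + 1) * (k + 1) := by
      have := Nat.add_one_mul_choose_eq (n - 1) k
      rwa [show n - 1 + 1 = n by omega] at this
    have hA : (n - k) * ((n + k).choose (2 * k) * (2 * k).choose k)
        = n * ((n - 1).choose k * (n + k).choose k) := by
      rw [h1]
      obtain ⟨w, hw⟩ : ∃ w, n - k = w := ⟨_, rfl⟩
      rw [hw] at h2' ⊢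
      calc w * ((n + k).choose k * n.choose k)
          = (n.choose k * w) * (n + k).choose k := by ring
        _ = (n.choose (k + 1) * (k + 1)) * (n + k).choose k := by rw [h2']
        _ = (n * (n - 1).choose k) * (n + k).choose k := by rw [h3]
        _ = n * ((n - 1).choose k * (n + k).choose k) := by ring
    -- Lemma B
    have hB : (n + k + a).choose (2 * k + 2 * a + 1) * (2 * k + 2 * a + 1)
        = (n + k + a).choose (2 * k + 2 * a) * (n - (k + a)) := by
      have := Nat.choose_succ_right_eq (n + k + a) (2 * k + 2 * a)
      rwa [show n + k + a - (2 * k + 2 * a) = n - (k + a) by omega] at this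
    -- Lemma C
    have hC : (2 * k + 2 * a + 1) * (2 * k + 1).ascFactorial (2 * a)
        = (2 * k + a + 1) * ((2 * k + 1).ascFactorial a * (2 * k + a + 2).ascFactorial a) := by
      have e1 : (2 * k + 1).ascFactorial (2 * a + 1)
          = (2 * k + 2 * a + 1) * (2 * k + 1).ascFactorial (2 * a) := by
        rw [asc_add' (2 * k + 1) (2 * a) 1, asc_one',
          show 2 * k + 1 + 2 * a = 2 * k + 2 * a + 1 by omega]
        ring
      have e2 : (2 * k + 1).ascFactorial (2 * a + 1)
          = (2 * k + 1).ascFactorial a * ((2 * k + a + 1) * (2 * k + a + 2).ascFactorial a) := by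
        rw [show 2 * a + 1 = a + (1 + a) by omega, asc_add' (2 * k + 1) a (1 + a),
          show 2 * k + 1 + a = 2 * k + a + 1 by omega, asc_add' (2 * k + a + 1) 1 a, asc_one',
          show 2 * k + a + 1 + 1 = 2 * k + a + 2 by omega]
      rw [← e1, e2]; ring
    -- cast the three lemmas to ℤ
    zify [hk] at hA
    zify [hka] at hB
    zify at hC
    push_cast
    linear_combination
      (((n : ℤ) - k - a) * ((n + k + a).choose (2 * k + 2 * a) : ℤ)
        * ((2 * k + 1).ascFactorial (2 * a) : ℤ)) * hA
      - ((n : ℤ) * (((n - 1).choose k : ℤ)) * (((n + k).choose k : ℤ))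
        * ((2 * k + 1).ascFactorial (2 * a) : ℤ)) * hB
      + ((n : ℤ) * (((n - 1).choose k : ℤ)) * (((n + k).choose k : ℤ))
        * (((n + k + a).choose (2 * k + 2 * a + 1) : ℤ))) * hC
end

section
/- For all nonnegative integers k and n, the identity ∑_{m=0}^{n-1} (2m+1)·C(m+k, 2k) = n(n-k)/(k+1) · C(n+k, 2k) holds. -/
theorem stmt11 (k n : ℕ) :
    ((k : ℤ) + 1) * ∑ m ∈ Finset.range n, (2 * (m : ℤ) + 1) * Nat.choose (m + k) (2 * k) =
      (n : ℤ) * ((n : ℤ) - k) * Nat.choose (n + k) (2 * k) := by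
  induction n with
  | zero => simp
  | succ n ih =>
    rw [Finset.sum_range_succ, mul_add, ih]
    push_cast
    rcases le_or_gt k (n + 1) with h | h
    · have h2 := Nat.choose_mul_succ_eq (n + k) (2 * k)
      have hsub : n + k + 1 - 2 * k = n + 1 - k := by omega
      rw [hsub] at h2
      have h3 : ((n + k).choose (2 * k) : ℤ) * (n + k + 1)
          = ((n + 1 + k).choose (2 * k) : ℤ) * ((n : ℤ) + 1 - k) := by
        have := congrArg (fun x : ℕ => (x : ℤ)) h2
        push_cast [Nat.cast_sub h] at this
        convert this using 2
        ring_nf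
      linear_combination ((n : ℤ) + 1) * h3
    · have h1 : (n + k).choose (2 * k) = 0 := Nat.choose_eq_zero_of_lt (by omega)
      have h2 : (n + 1 + k).choose (2 * k) = 0 := Nat.choose_eq_zero_of_lt (by omega)
      simp [h1, h2]
end

section
/- For all nonnegative integers k and n, the identity ∑_{m=0}^{n-1} (-1)^m·(2m+1)·C(m+k, 2k) = (-1)^{n-1}·(n-k)·C(n+k, 2k) holds. -/
lemma key12 (k n : ℕ) :
    ((n : ℤ) + 1 + k) * Nat.choose (n + k) (2 * k) =
      ((n : ℤ) + 1 - k) * Nat.choose (n + 1 + k) (2 * k) := by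
  by_cases h : n + 1 < k
  · have h1 : Nat.choose (n + k) (2 * k) = 0 := Nat.choose_eq_zero_of_lt (by omega)
    have h2 : Nat.choose (n + 1 + k) (2 * k) = 0 := Nat.choose_eq_zero_of_lt (by omega)
    simp [h1, h2]
  · push_neg at h
    have e1 : (n + k + 1) * Nat.choose (n + k) (2 * k) =
        Nat.choose (n + k + 1) (2 * k + 1) * (2 * k + 1) := Nat.add_one_mul_choose_eq (n + k) (2 * k)
    have e2 : Nat.choose (n + k + 1) (2 * k + 1) * (2 * k + 1) =
        Nat.choose (n + k + 1) (2 * k) * (n + k + 1 - 2 * k) :=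
      Nat.choose_succ_right_eq (n + k + 1) (2 * k)
    have e3 : n + k + 1 - 2 * k = n + 1 - k := by omega
    have : (n + k + 1) * Nat.choose (n + k) (2 * k) =
        Nat.choose (n + k + 1) (2 * k) * (n + 1 - k) := by rw [e1, e2, e3]
    have := congrArg (Nat.cast : ℕ → ℤ) this
    push_cast [e3, Nat.cast_sub h] at this
    have hx : n + 1 + k = n + k + 1 := by omega
    rw [hx]
    linarith [this]

theorem stmt12 (k n : ℕ) :
    ∑ m ∈ Finset.range n, (-1 : ℤ) ^ m * (2 * (m : ℤ) + 1) * Nat.choose (m + k) (2 * k) =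
      (-1 : ℤ) ^ (n + 1) * ((n : ℤ) - k) * Nat.choose (n + k) (2 * k) := by
  induction n with
  | zero =>
    rcases k with _ | k
    · simp
    · have : Nat.choose (0 + (k + 1)) (2 * (k + 1)) = 0 := Nat.choose_eq_zero_of_lt (by omega)
      simp only [this, Nat.cast_zero, mul_zero, Finset.range_zero, Finset.sum_empty]
  | succ n ih =>
    rw [Finset.sum_range_succ, ih]
    have := key12 k n
    have hx : n + 1 + k = n + k + 1 := by omega
    rw [hx] at this
    rw [show n + 1 + k = n + k + 1 from by omega]
    push_cast
    linear_combination ((-1 : ℤ) ^ n) * this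
end

section
/- For all positive integers n and nonnegative integers r, the sum ∑_{k=0}^{n-1} (-1)^k·(2k+1)^{2r+1}·D_k is congruent modulo 2n to n if n is odd and to 0 if n is even, where D_k is the k-th central Delannoy number. -/
open Finset

private lemma modeq_sum {s : Finset ℕ} {f g : ℕ → ℕ} (h : ∀ i ∈ s, f i ≡ g i [MOD 2]) :
    (∑ i ∈ s, f i) ≡ (∑ i ∈ s, g i) [MOD 2] := by
  classical
  induction s using Finset.induction_on with
  | empty => rfl
  | insert _ _ hx ih =>
    rw [Finset.sum_insert hx, Finset.sum_insert hx]
    exact Nat.ModEq.add (h _ (Finset.mem_insert_self _ _))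
      (ih fun i hi => h i (Finset.mem_insert_of_mem hi))
private lemma par_ee (a b : ℕ) : (2*a).choose (2*b) ≡ a.choose b [MOD 2] := by
  haveI : Fact (Nat.Prime 2) := ⟨Nat.prime_two⟩
  have h := Choose.choose_modEq_choose_mod_mul_choose_div_nat (p := 2) (n := 2*a) (k := 2*b)
  have e1 : 2*a % 2 = 0 := by omega
  have e2 : 2*b % 2 = 0 := by omega
  have e3 : 2*a / 2 = a := by omega
  have e4 : 2*b / 2 = b := by omega
  rw [e1, e2, e3, e4] at h
  simpa using h

private lemma par_eo (a b : ℕ) : (2*a).choose (2*b+1) ≡ 0 [MOD 2] := by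
  haveI : Fact (Nat.Prime 2) := ⟨Nat.prime_two⟩
  have h := Choose.choose_modEq_choose_mod_mul_choose_div_nat (p := 2) (n := 2*a) (k := 2*b+1)
  have e1 : 2*a % 2 = 0 := by omega
  have e2 : (2*b+1) % 2 = 1 := by omega
  have e3 : 2*a / 2 = a := by omega
  have e4 : (2*b+1) / 2 = b := by omega
  rw [e1, e2, e3, e4] at h
  simpa using h

private lemma par_oe (a b : ℕ) : (2*a+1).choose (2*b) ≡ a.choose b [MOD 2] := by
  haveI : Fact (Nat.Prime 2) := ⟨Nat.prime_two⟩
  have h := Choose.choose_modEq_choose_mod_mul_choose_div_nat (p := 2) (n := 2*a+1) (k := 2*b)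
  have e1 : (2*a+1) % 2 = 1 := by omega
  have e2 : 2*b % 2 = 0 := by omega
  have e3 : (2*a+1) / 2 = a := by omega
  have e4 : 2*b / 2 = b := by omega
  rw [e1, e2, e3, e4] at h
  simpa using h

private lemma par_oo (a b : ℕ) : (2*a+1).choose (2*b+1) ≡ a.choose b [MOD 2] := by
  haveI : Fact (Nat.Prime 2) := ⟨Nat.prime_two⟩
  have h := Choose.choose_modEq_choose_mod_mul_choose_div_nat (p := 2) (n := 2*a+1) (k := 2*b+1)
  have e1 : (2*a+1) % 2 = 1 := by omega
  have e2 : (2*b+1) % 2 = 1 := by omega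
  have e3 : (2*a+1) / 2 = a := by omega
  have e4 : (2*b+1) / 2 = b := by omega
  rw [e1, e2, e3, e4] at h
  simpa using h

private lemma evenprod : ∀ b : ℕ, ∀ a : ℕ, 1 ≤ b → (a+b).choose b * a.choose b ≡ 0 [MOD 2] := by
  intro b
  induction b using Nat.strong_induction_on with
  | _ b ih =>
    intro a hb
    rcases Nat.even_or_odd b with ⟨b', hb'⟩ | ⟨b', hb'⟩
    · have hb2 : b = 2*b' := by omega
      subst hb2
      have hb'1 : 1 ≤ b' := by omega
      rcases Nat.even_or_odd a with ⟨a', ha'⟩ | ⟨a', ha'⟩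
      · have ha2 : a = 2*a' := by omega
        subst ha2
        have h1 : (2*a'+2*b').choose (2*b') ≡ (a'+b').choose b' [MOD 2] := by
          have h := par_ee (a'+b') b'
          have e : 2*(a'+b') = 2*a'+2*b' := by ring
          rwa [e] at h
        calc (2*a'+2*b').choose (2*b') * (2*a').choose (2*b')
            ≡ (a'+b').choose b' * a'.choose b' [MOD 2] := Nat.ModEq.mul h1 (par_ee a' b')
          _ ≡ 0 [MOD 2] := ih b' (by omega) a' hb'1
      · have ha2 : a = 2*a'+1 := by omega
        subst ha2
        have h1 : (2*a'+1+2*b').choose (2*b') ≡ (a'+b').choose b' [MOD 2] := by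
          have h := par_oe (a'+b') b'
          have e : 2*(a'+b')+1 = 2*a'+1+2*b' := by ring
          rwa [e] at h
        calc (2*a'+1+2*b').choose (2*b') * (2*a'+1).choose (2*b')
            ≡ (a'+b').choose b' * a'.choose b' [MOD 2] := Nat.ModEq.mul h1 (par_oe a' b')
          _ ≡ 0 [MOD 2] := ih b' (by omega) a' hb'1
    · subst hb'
      rcases Nat.even_or_odd a with ⟨a', ha'⟩ | ⟨a', ha'⟩
      · have ha2 : a = 2*a' := by omega
        subst ha2
        calc (2*a'+(2*b'+1)).choose (2*b'+1) * (2*a').choose (2*b'+1)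
            ≡ (2*a'+(2*b'+1)).choose (2*b'+1) * 0 [MOD 2] := Nat.ModEq.mul_left _ (par_eo a' b')
          _ = 0 := mul_zero _
      · have ha2 : a = 2*a'+1 := by omega
        subst ha2
        have h1 : (2*a'+1+(2*b'+1)).choose (2*b'+1) ≡ 0 [MOD 2] := by
          have h := par_eo (a'+b'+1) b'
          have e : 2*(a'+b'+1) = 2*a'+1+(2*b'+1) := by ring
          rwa [e] at h
        calc (2*a'+1+(2*b'+1)).choose (2*b'+1) * (2*a'+1).choose (2*b'+1)
            ≡ 0 * (2*a'+1).choose (2*b'+1) [MOD 2] := Nat.ModEq.mul_right _ h1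
          _ = 0 := zero_mul _

private lemma sum_range_two_mul (f : ℕ → ℕ) (m : ℕ) :
    ∑ i ∈ range (2*m), f i = ∑ i ∈ range m, (f (2*i) + f (2*i+1)) := by
  induction m with
  | zero => simp
  | succ m ih =>
    have e : 2*(m+1) = (2*m+1)+1 := by ring
    rw [e, sum_range_succ, sum_range_succ, ih, sum_range_succ]
    ring

private lemma Vpar (n : ℕ) (hn : 0 < n) :
    (∑ j ∈ range n, (n+j).choose j * (n-1).choose j) ≡ n [MOD 2] := by
  set f : ℕ → ℕ := fun j => (n+j).choose j * (n-1).choose j with hf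
  rcases Nat.even_or_odd n with ⟨a, ha⟩ | ⟨a, ha⟩
  · -- n even, n = 2a, a ≥ 1
    have hn2 : n = 2*a := by omega
    have ha1 : 1 ≤ a := by omega
    subst hn2
    rw [sum_range_two_mul f a]
    have hterm : ∀ i ∈ range a, (f (2*i) + f (2*i+1)) ≡ 0 [MOD 2] := by
      intro i _
      have h1 : f (2*i) ≡ (a+i).choose i * (a-1).choose i [MOD 2] := by
        have e1 : 2*a + 2*i = 2*(a+i) := by ring
        have e2 : 2*a - 1 = 2*(a-1)+1 := by omega
        simp only [hf]
        rw [e1, e2]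
        exact Nat.ModEq.mul (par_ee (a+i) i) (par_oe (a-1) i)
      have h2 : f (2*i+1) ≡ (a+i).choose i * (a-1).choose i [MOD 2] := by
        have e1 : 2*a + (2*i+1) = 2*(a+i)+1 := by ring
        have e2 : 2*a - 1 = 2*(a-1)+1 := by omega
        simp only [hf]
        rw [e1, e2]
        exact Nat.ModEq.mul (par_oo (a+i) i) (par_oo (a-1) i)
      calc f (2*i) + f (2*i+1)
          ≡ (a+i).choose i * (a-1).choose i + (a+i).choose i * (a-1).choose i [MOD 2] :=
            Nat.ModEq.add h1 h2
        _ ≡ 0 [MOD 2] := (Nat.modEq_zero_iff_dvd).2 ⟨(a+i).choose i * (a-1).choose i, by ring⟩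
    calc ∑ i ∈ range a, (f (2*i) + f (2*i+1))
        ≡ ∑ i ∈ range a, 0 [MOD 2] := modeq_sum hterm
      _ ≡ 2*a [MOD 2] := by simp [Nat.ModEq, Nat.mul_mod_right]
  · -- n odd, n = 2a+1
    have hn2 : n = 2*a+1 := by omega
    subst hn2
    rw [sum_range_succ, sum_range_two_mul f a]
    have hterm : ∀ i ∈ range a, (f (2*i) + f (2*i+1)) ≡ (if i = 0 then 1 else 0) [MOD 2] := by
      intro i _
      have h1 : f (2*i) ≡ (a+i).choose i * a.choose i [MOD 2] := by
        have e1 : 2*a+1 + 2*i = 2*(a+i)+1 := by ring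
        have e2 : 2*a+1 - 1 = 2*a := by omega
        simp only [hf]
        rw [e1, e2]
        exact Nat.ModEq.mul (par_oe (a+i) i) (par_ee a i)
      have h2 : f (2*i+1) ≡ 0 [MOD 2] := by
        have e1 : 2*a+1 + (2*i+1) = 2*(a+i+1) := by ring
        simp only [hf]
        rw [e1]
        have h := Nat.ModEq.mul_right ((2*a+1-1).choose (2*i+1)) (par_eo (a+i+1) i)
        simpa using h
      rcases Nat.eq_zero_or_pos i with rfl | hi
      · simpa using Nat.ModEq.add h1 h2
      · have h3 : (a+i).choose i * a.choose i ≡ 0 [MOD 2] := evenprod i a hi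
        simp only [Nat.pos_iff_ne_zero.1 hi, if_neg (Nat.pos_iff_ne_zero.1 hi)]
        calc f (2*i) + f (2*i+1) ≡ 0 + 0 [MOD 2] := Nat.ModEq.add (h1.trans h3) h2
          _ = 0 := by ring
    have hlast : f (2*a) ≡ (a+a).choose a * a.choose a [MOD 2] := by
      have e1 : 2*a+1 + 2*a = 2*(a+a)+1 := by ring
      have e2 : 2*a+1 - 1 = 2*a := by omega
      have e3 : 2*a = 2 * a := rfl
      simp only [hf]
      rw [e1, e2]
      have := Nat.ModEq.mul (par_oe (a+a) a) (par_ee a a)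
      simpa [Nat.choose_self] using this
    have hlast' : f (2*a) ≡ (if a = 0 then 1 else 0) [MOD 2] := by
      rcases Nat.eq_zero_or_pos a with rfl | hA
      · simpa using hlast
      · simp only [if_neg (Nat.pos_iff_ne_zero.1 hA)]
        exact hlast.trans (evenprod a a hA)
    calc (∑ i ∈ range a, (f (2*i) + f (2*i+1))) + f (2*a)
        ≡ (∑ i ∈ range a, if i = 0 then 1 else 0) + (if a = 0 then 1 else 0) [MOD 2] :=
          Nat.ModEq.add (modeq_sum hterm) hlast'
      _ = 1 := by
          rcases Nat.eq_zero_or_pos a with rfl | hA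
          · simp
          · rw [Finset.sum_ite_eq' (range a) 0 (fun _ => 1)]
            simp [Finset.mem_range, hA, Nat.pos_iff_ne_zero.1 hA]
      _ ≡ 2*a+1 [MOD 2] := by show 1 % 2 = (2*a+1) % 2; omega

-- (2j+1) C(n+j, 2j+1) = (n-j) C(n+j, 2j)  over ℤ
private lemma keyA (n j : ℕ) :
    (2*(j:ℤ)+1) * ((n+j).choose (2*j+1) : ℤ) = ((n:ℤ) - j) * ((n+j).choose (2*j) : ℤ) := by
  rcases le_or_gt j n with h | h
  · have hN := Nat.choose_succ_right_eq (n+j) (2*j)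
    have e : n + j - 2*j = n - j := by omega
    rw [e] at hN
    have hc : ((n - j : ℕ) : ℤ) = (n:ℤ) - j := by
      have := Int.ofNat_sub h
      exact_mod_cast this
    have hZ : ((n+j).choose (2*j+1) : ℤ) * (2*(j:ℤ)+1) = ((n+j).choose (2*j) : ℤ) * ((n:ℤ) - j) := by
      rw [← hc]
      exact_mod_cast congrArg (fun x : ℕ => (x : ℤ)) hN
    linarith [hZ]
  · have h1 : (n+j).choose (2*j+1) = 0 := Nat.choose_eq_zero_of_lt (by omega)
    have h2 : (n+j).choose (2*j) = 0 := Nat.choose_eq_zero_of_lt (by omega)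
    rw [h1, h2]
    push_cast
    ring

-- Lemma A: telescoped closed form
private lemma sumA (j n : ℕ) :
    ∑ k ∈ range n, (-1:ℤ)^k * (2*(k:ℤ)+1) * ((k+j).choose (2*j) : ℤ)
      = (-1:ℤ)^(n+1) * (2*(j:ℤ)+1) * ((n+j).choose (2*j+1) : ℤ) := by
  induction n with
  | zero =>
    simp [Nat.choose_eq_zero_of_lt (show j < 2*j+1 by omega)]
  | succ n ih =>
    rw [sum_range_succ, ih]
    have hp : ((n+1+j).choose (2*j+1) : ℤ)
        = ((n+j).choose (2*j) : ℤ) + ((n+j).choose (2*j+1) : ℤ) := by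
      have := Nat.choose_succ_succ (n+j) (2*j)
      have e : n + 1 + j = (n+j) + 1 := by omega
      rw [e]
      exact_mod_cast this
    have hk := keyA n j
    rw [hp]
    push_cast
    linear_combination (-((-1:ℤ)^n) * 2) * hk

-- Key recurrence identity
private lemma keyK (k j : ℕ) :
    (2*(k:ℤ)+1)^2 * (((k+j).choose (2*j) * (2*j).choose j : ℕ) : ℤ)
      = (2*(j:ℤ)+1)^2 * (((k+j).choose (2*j) * (2*j).choose j : ℕ) : ℤ)
      + (2*(j:ℤ)+2)^2 * (((k+j+1).choose (2*j+2) * (2*j+2).choose (j+1) : ℕ) : ℤ) := by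
  rcases lt_or_ge k j with h | h
  · have h1 : (k+j).choose (2*j) = 0 := Nat.choose_eq_zero_of_lt (by omega)
    have h2 : (k+j+1).choose (2*j+2) = 0 := Nat.choose_eq_zero_of_lt (by omega)
    rw [h1, h2]
    push_cast
    ring
  · -- h1 : (k+j+1) * C(k+j, 2j) = (2j+1) * C(k+j+1, 2j+1)
    have hN1 := Nat.add_one_mul_choose_eq (k+j) (2*j)
    have h1 : ((k:ℤ)+j+1) * ((k+j).choose (2*j) : ℤ)
        = ((k+j+1).choose (2*j+1) : ℤ) * (2*(j:ℤ)+1) := by exact_mod_cast hN1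
    -- h2 : (2j+2) * C(k+j+1, 2j+2) = (k-j) * C(k+j+1, 2j+1)
    have hN2 := Nat.choose_succ_right_eq (k+j+1) (2*j+1)
    have e2 : k+j+1 - (2*j+1) = k - j := by omega
    rw [e2] at hN2
    have h2 : ((k+j+1).choose (2*j+2) : ℤ) * (2*(j:ℤ)+2)
        = ((k+j+1).choose (2*j+1) : ℤ) * ((k:ℤ) - j) := by
      have hc : ((k - j : ℕ) : ℤ) = (k:ℤ) - j := by
        have := Int.ofNat_sub h
        exact_mod_cast this
      rw [← hc]
      exact_mod_cast hN2
    -- h3 : (j+1) * C(2j+2, j+1) = 2*(2j+1)*C(2j, j)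
    have hN3 := Nat.succ_mul_centralBinom_succ j
    have h3 : ((j:ℤ)+1) * ((2*j+2).choose (j+1) : ℤ) = 2*(2*(j:ℤ)+1) * ((2*j).choose j : ℤ) := by
      have e3 : 2*(j+1) = 2*j+2 := by ring
      unfold Nat.centralBinom at hN3
      rw [e3] at hN3
      exact_mod_cast hN3
    push_cast
    linear_combination (4*((k:ℤ)-j)*((2*j).choose j : ℤ)) * h1
      - (4*(2*(j:ℤ)+1)*((2*j).choose j : ℤ)) * h2
      - (2*(2*(j:ℤ)+2)*(((k+j+1).choose (2*j+2) : ℕ) : ℤ)) * h3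

-- Lemma B : (2j+1) C(m+1+j, 2j+1) C(2j,j) = (m+1) C(m+1+j, j) C(m, j)   over ℤ
private lemma lemB (m j : ℕ) :
    (2*(j:ℤ)+1) * ((m+1+j).choose (2*j+1) : ℤ) * ((2*j).choose j : ℤ)
      = ((m:ℤ)+1) * ((m+1+j).choose j : ℤ) * ((m).choose j : ℤ) := by
  rcases lt_or_ge m j with h | h
  · have h1 : (m+1+j).choose (2*j+1) = 0 := Nat.choose_eq_zero_of_lt (by omega)
    have h2 : m.choose j = 0 := Nat.choose_eq_zero_of_lt (by omega)
    rw [h1, h2]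
    push_cast
    ring
  · have fpos : (0:ℤ) < ((j.factorial * j.factorial * (m-j).factorial : ℕ) : ℤ) := by
      positivity
    have s1 : ((2*j).choose j : ℤ) * (j.factorial : ℤ) * (j.factorial : ℤ) = ((2*j).factorial : ℤ) := by
      have := Nat.choose_mul_factorial_mul_factorial (show j ≤ 2*j by omega)
      have e : 2*j - j = j := by omega
      rw [e] at this
      exact_mod_cast this
    have s2 : (2*(j:ℤ)+1) * ((2*j).factorial : ℤ) = ((2*j+1).factorial : ℤ) := by
      have := Nat.factorial_succ (2*j)
      push_cast [this]
      ring
    have s3 : ((m+1+j).choose (2*j+1) : ℤ) * ((2*j+1).factorial : ℤ) * ((m-j).factorial : ℤ)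
        = ((m+1+j).factorial : ℤ) := by
      have h' : 2*j+1 ≤ m+1+j := by omega
      have := Nat.choose_mul_factorial_mul_factorial h'
      have e : m+1+j - (2*j+1) = m - j := by omega
      rw [e] at this
      exact_mod_cast this
    have t1 : (m.choose j : ℤ) * (j.factorial : ℤ) * ((m-j).factorial : ℤ) = (m.factorial : ℤ) := by
      exact_mod_cast Nat.choose_mul_factorial_mul_factorial h
    have t2 : ((m:ℤ)+1) * (m.factorial : ℤ) = ((m+1).factorial : ℤ) := by
      have := Nat.factorial_succ m
      push_cast [this]
      ring
    have t3 : ((m+1+j).choose j : ℤ) * (j.factorial : ℤ) * ((m+1).factorial : ℤ)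
        = ((m+1+j).factorial : ℤ) := by
      have h' : j ≤ m+1+j := by omega
      have := Nat.choose_mul_factorial_mul_factorial h'
      have e : m+1+j - j = m+1 := by omega
      rw [e] at this
      exact_mod_cast this
    have key : ((2*(j:ℤ)+1) * ((m+1+j).choose (2*j+1) : ℤ) * ((2*j).choose j : ℤ))
          * ((j.factorial * j.factorial * (m-j).factorial : ℕ) : ℤ)
        = (((m:ℤ)+1) * ((m+1+j).choose j : ℤ) * ((m).choose j : ℤ))
          * ((j.factorial * j.factorial * (m-j).factorial : ℕ) : ℤ) := by
      push_cast
      calc (2*(j:ℤ)+1) * ((m+1+j).choose (2*j+1) : ℤ) * ((2*j).choose j : ℤ)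
            * ((j.factorial : ℤ) * (j.factorial : ℤ) * ((m-j).factorial : ℤ))
          = ((m+1+j).factorial : ℤ) := by
            linear_combination ((2*(j:ℤ)+1) * ((m+1+j).choose (2*j+1) : ℤ) * ((m-j).factorial : ℤ)) * s1
              + (((m+1+j).choose (2*j+1) : ℤ) * ((m-j).factorial : ℤ)) * s2 + s3
        _ = ((m:ℤ)+1) * ((m+1+j).choose j : ℤ) * ((m).choose j : ℤ)
            * ((j.factorial : ℤ) * (j.factorial : ℤ) * ((m-j).factorial : ℤ)) := by
            linear_combination (-(((m:ℤ)+1) * ((m+1+j).choose j : ℤ) * (j.factorial : ℤ))) * t1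
              + (-(((m+1+j).choose j : ℤ) * (j.factorial : ℤ))) * t2 - t3
    exact mul_right_cancel₀ (ne_of_gt fpos) key

private lemma gstep (R : Type) [CommRing R] (n m j : ℕ) :
    (∑ k ∈ range n, (-1:R)^k * (2*(k:R)+1)^(2*(m+1)+1)
        * ((k+j).choose (2*j) : R) * ((2*j).choose j : R))
      = (2*(j:R)+1)^2 * (∑ k ∈ range n, (-1:R)^k * (2*(k:R)+1)^(2*m+1)
          * ((k+j).choose (2*j) : R) * ((2*j).choose j : R))
      + (2*(j:R)+2)^2 * (∑ k ∈ range n, (-1:R)^k * (2*(k:R)+1)^(2*m+1)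
          * ((k+(j+1)).choose (2*(j+1)) : R) * ((2*(j+1)).choose (j+1) : R)) := by
  rw [Finset.mul_sum, Finset.mul_sum, ← Finset.sum_add_distrib]
  apply Finset.sum_congr rfl
  intro k _
  have hK := congrArg (fun z : ℤ => (z : R)) (keyK k j)
  push_cast at hK
  have he : 2*(m+1)+1 = (2*m+1)+2 := by ring
  rw [he, pow_add]
  have e1 : k+(j+1) = k+j+1 := by ring
  have e2 : 2*(j+1) = 2*j+2 := by ring
  rw [e1, e2]
  linear_combination ((-1:R)^k * (2*(k:R)+1)^(2*m+1)) * hK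

private lemma gbase (R : Type) [CommRing R] (n j : ℕ) :
    (∑ k ∈ range n, (-1:R)^k * (2*(k:R)+1)^(2*0+1)
        * ((k+j).choose (2*j) : R) * ((2*j).choose j : R))
      = (-1:R)^(n+1) * ((2*(j:R)+1) * ((n+j).choose (2*j+1) : R) * ((2*j).choose j : R)) := by
  have hA := congrArg (fun z : ℤ => (z : R)) (sumA j n)
  push_cast at hA
  calc (∑ k ∈ range n, (-1:R)^k * (2*(k:R)+1)^(2*0+1)
          * ((k+j).choose (2*j) : R) * ((2*j).choose j : R))
      = (∑ k ∈ range n, (-1:R)^k * (2*(k:R)+1) * ((k+j).choose (2*j) : R))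
          * ((2*j).choose j : R) := by
        rw [Finset.sum_mul]
        apply Finset.sum_congr rfl
        intro k _
        ring
    _ = (-1:R)^(n+1) * ((2*(j:R)+1) * ((n+j).choose (2*j+1) : R) * ((2*j).choose j : R)) := by
        rw [hA]
        ring

private lemma gcong (n : ℕ) (hn : 0 < n) (m j : ℕ) :
    (∑ k ∈ range n, (-1 : ZMod (2*n))^k * (2*(k:ZMod (2*n))+1)^(2*m+1)
        * ((k+j).choose (2*j) : ZMod (2*n)) * ((2*j).choose j : ZMod (2*n)))
      = (n : ZMod (2*n)) * ((((n+j).choose j * (n-1).choose j) % 2 : ℕ) : ZMod (2*n)) := by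
  have h0 : (n : ZMod (2*n)) * 2 = 0 := by
    have h := ZMod.natCast_self (2*n)
    push_cast at h
    linear_combination h
  have hnmul : ∀ x : ℕ, (n : ZMod (2*n)) * (x : ZMod (2*n))
      = (n : ZMod (2*n)) * ((x % 2 : ℕ) : ZMod (2*n)) := by
    intro x
    calc (n : ZMod (2*n)) * (x : ZMod (2*n))
        = (n : ZMod (2*n)) * ((2*(x/2) + x % 2 : ℕ) : ZMod (2*n)) := by rw [Nat.div_add_mod]
      _ = (n : ZMod (2*n)) * ((x % 2 : ℕ) : ZMod (2*n)) := by
          push_cast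
          linear_combination (((x/2 : ℕ) : ZMod (2*n))) * h0
  induction m generalizing j with
  | zero =>
    rw [gbase]
    obtain ⟨m0, rfl⟩ : ∃ m0, n = m0+1 := ⟨n-1, by omega⟩
    simp only [Nat.add_sub_cancel]
    have hB := congrArg (fun z : ℤ => (z : ZMod (2*(m0+1)))) (lemB m0 j)
    push_cast at hB
    have hx := hnmul ((m0+1+j).choose j * (m0).choose j)
    push_cast at hx
    rcases neg_one_pow_eq_or (ZMod (2*(m0+1))) (m0+1+1) with hs | hs
    · rw [hs, one_mul, hB]
      push_cast at h0 ⊢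
      linear_combination hx
    · rw [hs]
      push_cast at h0 hx ⊢
      linear_combination - hB - hx
        - ((((m0+1+j).choose j * (m0).choose j) % 2 : ℕ) : ZMod (2*(m0+1))) * h0
  | succ m ih =>
    rw [gstep, ih j, ih (j+1)]
    linear_combination ((2*(j:ZMod (2*n))^2+2*(j:ZMod (2*n)))
          * ((((n+j).choose j * (n-1).choose j) % 2 : ℕ) : ZMod (2*n))) * h0
      + (2*((j:ZMod (2*n))+1)^2
          * ((((n+(j+1)).choose (j+1) * (n-1).choose (j+1)) % 2 : ℕ) : ZMod (2*n))) * h0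

theorem stmt14 (n : ℕ) (hn : 0 < n) (r : ℕ) :
    (∑ k ∈ Finset.range n, (-1 : ℤ) ^ k * (2 * (k : ℤ) + 1) ^ (2 * r + 1) * delannoy k) ≡
      (if Odd n then (n : ℤ) else 0) [ZMOD 2 * n] := by
  rw [show ((2:ℤ) * (n:ℤ)) = ((2*n : ℕ) : ℤ) from by push_cast; ring,
    ← ZMod.intCast_eq_intCast_iff]
  simp only [delannoy]
  push_cast
  have h0 : (n : ZMod (2*n)) * 2 = 0 := by
    have h := ZMod.natCast_self (2*n)
    push_cast at h
    linear_combination h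
  have hnmul : ∀ x : ℕ, (n : ZMod (2*n)) * (x : ZMod (2*n))
      = (n : ZMod (2*n)) * ((x % 2 : ℕ) : ZMod (2*n)) := by
    intro x
    calc (n : ZMod (2*n)) * (x : ZMod (2*n))
        = (n : ZMod (2*n)) * ((2*(x/2) + x % 2 : ℕ) : ZMod (2*n)) := by rw [Nat.div_add_mod]
      _ = (n : ZMod (2*n)) * ((x % 2 : ℕ) : ZMod (2*n)) := by
          push_cast
          linear_combination (((x/2 : ℕ) : ZMod (2*n))) * h0
  have hswap : (∑ k ∈ range n, (-1 : ZMod (2*n))^k * (2*(k:ZMod (2*n))+1)^(2*r+1)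
        * (∑ i ∈ range (k+1), ((k+i).choose (2*i) : ZMod (2*n)) * ((2*i).choose i : ZMod (2*n))))
      = ∑ j ∈ range n, ∑ k ∈ range n, (-1 : ZMod (2*n))^k * (2*(k:ZMod (2*n))+1)^(2*r+1)
        * ((k+j).choose (2*j) : ZMod (2*n)) * ((2*j).choose j : ZMod (2*n)) := by
    rw [← Finset.sum_comm]
    apply Finset.sum_congr rfl
    intro k hk
    rw [Finset.mul_sum]
    have hsub : range (k+1) ⊆ range n := by
      apply Finset.range_subset_range.2
      simp only [Finset.mem_range] at hk
      omega
    rw [Finset.sum_subset hsub]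
    · apply Finset.sum_congr rfl
      intro i _
      ring
    · intro i _ hi
      simp only [Finset.mem_range, not_lt] at hi
      rw [Nat.choose_eq_zero_of_lt (show k+i < 2*i by omega)]
      push_cast
      ring
  rw [hswap]
  rw [Finset.sum_congr rfl (fun j _ => gcong n hn r j), ← Finset.mul_sum]
  rw [show (∑ j ∈ range n, ((((n+j).choose j * (n-1).choose j) % 2 : ℕ) : ZMod (2*n)))
      = ((∑ j ∈ range n, ((n+j).choose j * (n-1).choose j) % 2 : ℕ) : ZMod (2*n)) from by
    push_cast; rfl]
  rw [hnmul]
  have hX : (∑ j ∈ range n, ((n+j).choose j * (n-1).choose j) % 2) % 2 = n % 2 := by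
    have h1 : (∑ j ∈ range n, ((n+j).choose j * (n-1).choose j) % 2)
        ≡ (∑ j ∈ range n, (n+j).choose j * (n-1).choose j) [MOD 2] := by
      apply modeq_sum
      intro i _
      show ((n+i).choose i * (n-1).choose i % 2) % 2 = ((n+i).choose i * (n-1).choose i) % 2
      omega
    exact h1.trans (Vpar n hn)
  rw [hX]
  rcases Nat.even_or_odd n with he | ho
  · rw [if_neg (by simpa using (Nat.not_odd_iff_even).2 he), Nat.even_iff.1 he]
    push_cast
    ring
  · rw [if_pos ho, Nat.odd_iff.1 ho]
    push_cast
    ring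
end

section
/- For all integers n ≥ 0 and all k with 0 ≤ k ≤ n-1, the identity ∑_{m=0}^{n-1} (2m+1)^3·C(m+k, 2k)^2 = (n-k)^2·(2n^2-k-1)/(k+1) · C(n+k, 2k)^2 holds. -/
lemma choose_step (n k : ℕ) (hk : k ≤ n) :
    ((n : ℤ) + 1 - k) * Nat.choose (n + 1 + k) (2 * k) =
      ((n : ℤ) + 1 + k) * Nat.choose (n + k) (2 * k) := by
  have h1 : Nat.choose (n + 1 + k) (2 * k) = Nat.choose (n + k + 1) (n - k + 1) := by
    rw [show n + 1 + k = n + k + 1 by ring, show n - k + 1 = (n + k + 1) - 2 * k by omega,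
      Nat.choose_symm (by omega)]
  have h2 : Nat.choose (n + k) (2 * k) = Nat.choose (n + k) (n - k) := by
    rw [show n - k = (n + k) - 2 * k by omega, Nat.choose_symm (by omega)]
  have h4 : (n + k + 1) * Nat.choose (n + k) (n - k) =
      Nat.choose (n + k + 1) (n - k + 1) * (n - k + 1) := Nat.add_one_mul_choose_eq (n + k) (n - k)
  have := congrArg (Nat.cast : ℕ → ℤ) h4
  push_cast [Nat.cast_sub hk] at this
  rw [h1, h2]
  linarith [this]

theorem stmt15 (n k : ℕ) (hk : k < n) :
    ((k : ℤ) + 1) *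
        ∑ m ∈ Finset.range n, (2 * (m : ℤ) + 1) ^ 3 * (Nat.choose (m + k) (2 * k)) ^ 2 =
      ((n : ℤ) - k) ^ 2 * (2 * (n : ℤ) ^ 2 - k - 1) * (Nat.choose (n + k) (2 * k)) ^ 2 := by
  induction n, hk using Nat.le_induction with
  | base =>
      rw [Finset.sum_range_succ]
      have hz : ∑ m ∈ Finset.range k, (2 * (m : ℤ) + 1) ^ 3 * (Nat.choose (m + k) (2 * k)) ^ 2 = 0 := by
        apply Finset.sum_eq_zero
        intro m hm
        rw [Finset.mem_range] at hm
        rw [Nat.choose_eq_zero_of_lt (by omega)]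
        simp
      have ha : Nat.choose (k + k) (2 * k) = 1 := by
        rw [show k + k = 2 * k by ring, Nat.choose_self]
      have hb : Nat.choose (k + 1 + k) (2 * k) = 2 * k + 1 := by
        rw [show k + 1 + k = 2 * k + 1 by ring, Nat.choose_succ_self_right]
      rw [hz, ha, hb]
      push_cast
      ring
  | succ n hn ih =>
      rw [Finset.sum_range_succ, mul_add, ih]
      have hstep := choose_step n k (le_of_lt hn)
      push_cast
      linear_combination (-(2 * ((n : ℤ) + 1) ^ 2 - k - 1)) *
        (((n : ℤ) + 1 - k) * Nat.choose (n + 1 + k) (2 * k) +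
          ((n : ℤ) + 1 + k) * Nat.choose (n + k) (2 * k)) * hstep
end
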